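/- arXiv:2212.03910 — 5 statements merged into one kernel-verified Lean document; each statement's English description precedes it below -/
import Mathlib

section
/- Let f : ℝ → ℝ be Lebesgue integrable. If liminf as t → 0⁺ of t^(−1/2) ∬_{ℝ×ℝ} p_t(x,y) |f(x) − f(y)| dx dy is finite, then there exists a function g : ℝ → ℝ with g = f Lebesgue-a.e. such that g has bounded pointwise variation on ℝ, i.e. sup over all finite increasing sequences x₀ < x₁ < … < x_k of Σᵢ |g(xᵢ) − g(xᵢ₋₁)| is finite. -/
open MeasureTheory Real Filter
open Topology Set
open scoped ENNReal NNReal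

/-- The Gaussian heat kernel on `ℝ`. -/
noncomputable def heatKernel (t x y : ℝ) : ℝ :=
  (4 * Real.pi * t) ^ (-(1 : ℝ) / 2) * Real.exp (-(x - y) ^ 2 / (4 * t))

lemma monotone_eVariationOn_le {g : ℝ → ℝ} (hg : Monotone g) {m M : ℝ}
    (h1 : ∀ x, m ≤ g x) (h2 : ∀ x, g x ≤ M) :
    eVariationOn g Set.univ ≤ ENNReal.ofReal (M - m) := by
  apply iSup_le
  rintro ⟨n, ⟨u, hu, -⟩⟩
  calc ∑ i ∈ Finset.range n, edist (g (u (i+1))) (g (u i))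
      = ∑ i ∈ Finset.range n, ENNReal.ofReal (g (u (i+1)) - g (u i)) := by
        refine Finset.sum_congr rfl fun i _ => ?_
        rw [edist_dist, Real.dist_eq, abs_of_nonneg (sub_nonneg.2 (hg (hu (Nat.le_succ i)) : _))]
    _ = ENNReal.ofReal (∑ i ∈ Finset.range n, (g (u (i+1)) - g (u i))) :=
        (ENNReal.ofReal_sum_of_nonneg (fun i _ => sub_nonneg.2 (hg (hu (Nat.le_succ i))))).symm
    _ = ENNReal.ofReal (g (u n) - g (u 0)) := by rw [Finset.sum_range_sub fun i => g (u i)]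
    _ ≤ _ := ENNReal.ofReal_le_ofReal (by have := h1 (u 0); have := h2 (u n); linarith)

lemma eVariationOn_sub_le (p q : ℝ → ℝ) (s : Set ℝ) :
    eVariationOn (p - q) s ≤ eVariationOn p s + eVariationOn q s := by
  apply iSup_le
  rintro ⟨n, ⟨u, hu, us⟩⟩
  calc ∑ i ∈ Finset.range n, edist ((p - q) (u (i+1))) ((p - q) (u i))
      ≤ ∑ i ∈ Finset.range n, (edist (p (u (i+1))) (p (u i)) + edist (q (u (i+1))) (q (u i))) := by
        refine Finset.sum_le_sum fun i _ => ?_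
        simp only [Pi.sub_apply, edist_dist]
        rw [← ENNReal.ofReal_add dist_nonneg dist_nonneg]
        exact ENNReal.ofReal_le_ofReal (dist_sub_sub_le _ _ _ _)
    _ = (∑ i ∈ Finset.range n, edist (p (u (i+1))) (p (u i)))
        + ∑ i ∈ Finset.range n, edist (q (u (i+1))) (q (u i)) := Finset.sum_add_distrib
    _ ≤ _ := add_le_add (eVariationOn.sum_le (f := p) (n := n) hu us) (eVariationOn.sum_le (f := q) (n := n) hu us)

lemma eVariationOn_le_of_tendsto {F : ℕ → ℝ → ℝ} {f : ℝ → ℝ} {s : Set ℝ} {L : ℝ≥0∞}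
    (hconv : ∀ x ∈ s, Tendsto (fun n => F n x) atTop (𝓝 (f x)))
    (hvar : ∀ n, eVariationOn (F n) s ≤ L) : eVariationOn f s ≤ L := by
  by_contra hlt
  push_neg at hlt
  obtain ⟨n, hn⟩ := (eVariationOn.lowerSemicontinuous_aux hconv hlt).exists
  exact hn.not_ge (hvar n)

lemma eVariationOn_le_lintegral {g : ℝ → ℝ} {φ : ℝ → ℝ≥0∞}
    (hg : ∀ a b : ℝ, a ≤ b → edist (g b) (g a) ≤ ∫⁻ s in Set.Ioc a b, φ s) :
    eVariationOn g Set.univ ≤ ∫⁻ s, φ s := by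
  apply iSup_le
  rintro ⟨n, ⟨u, hu, -⟩⟩
  have key : ∀ m : ℕ, ∑ i ∈ Finset.range m, edist (g (u (i+1))) (g (u i))
      ≤ ∫⁻ s in Set.Ioc (u 0) (u m), φ s := by
    intro m
    induction m with
    | zero => simp
    | succ m ih =>
      rw [Finset.sum_range_succ,
        ← Set.Ioc_union_Ioc_eq_Ioc (hu (Nat.zero_le m)) (hu (Nat.le_succ m)),
        lintegral_union measurableSet_Ioc (Set.Ioc_disjoint_Ioc_of_le le_rfl)]
      exact add_le_add ih (hg _ _ (hu (Nat.le_succ m)))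
  exact (key n).trans (setLIntegral_le_lintegral _ _)


/-- From a set of full measure on which `f` has bounded variation, produce a BV representative. -/
lemma bv_rep_of_ae {f : ℝ → ℝ} {S : Set ℝ} (hS : ∀ᵐ x, x ∈ S)
    (hbv : BoundedVariationOn f S) :
    ∃ g : ℝ → ℝ, g =ᵐ[volume] f ∧ BoundedVariationOn g Set.univ := by
  have hvne : (volume : Measure ℝ) ≠ 0 := by
    intro h0
    have := Real.volume_Icc (a := 0) (b := 1)
    rw [h0] at this
    simp at this
  have : (Filter.NeBot (ae (volume : Measure ℝ))) := ae_neBot.2 hvne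
  obtain ⟨c, hc⟩ := hS.exists
  set V : ℝ := (eVariationOn f S).toReal with hV
  have hV0 : 0 ≤ V := ENNReal.toReal_nonneg
  have lbv : LocallyBoundedVariationOn f S := hbv.locallyBoundedVariationOn
  set p : ℝ → ℝ := variationOnFromTo f S c with hp
  have hpmono : MonotoneOn p S := variationOnFromTo.monotoneOn lbv hc
  have hqmono : MonotoneOn (p - f) S := variationOnFromTo.sub_self_monotoneOn lbv hc
  have pbound : ∀ x, |p x| ≤ V := by
    intro x
    rcases le_total c x with hcx | hcx
    · rw [hp, variationOnFromTo.eq_of_le f S hcx, abs_of_nonneg ENNReal.toReal_nonneg]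
      exact ENNReal.toReal_mono hbv (eVariationOn.mono f Set.inter_subset_left)
    · rw [hp, variationOnFromTo.eq_of_ge f S hcx, abs_neg, abs_of_nonneg ENNReal.toReal_nonneg]
      exact ENNReal.toReal_mono hbv (eVariationOn.mono f Set.inter_subset_left)
  have fbound : ∀ x ∈ S, |f x - f c| ≤ V := by
    intro x hx
    rw [← Real.dist_eq]
    exact hbv.dist_le hx hc
  set BQ : ℝ := 2 * V + |f c| with hBQ
  have hBQ0 : 0 ≤ BQ := by positivity
  have qbound : ∀ x ∈ S, |(p - f) x| ≤ BQ := by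
    intro x hx
    have h1 : |p x - f x| ≤ |p x| + |f x| := by
      rw [sub_eq_add_neg]
      exact (abs_add_le _ _).trans (by rw [abs_neg])
    have h2 : |f x| ≤ V + |f c| := by
      have h3 : |f x| - |f c| ≤ |f x - f c| := abs_sub_abs_le_abs_sub _ _
      have := fbound x hx
      linarith
    have := pbound x
    simp only [Pi.sub_apply]
    linarith
  obtain ⟨P, hPmono, hPeq⟩ := hpmono.exists_monotone_extension
    ⟨-V, by rintro _ ⟨x, hx, rfl⟩; linarith [(abs_le.1 (pbound x)).1]⟩
    ⟨V, by rintro _ ⟨x, hx, rfl⟩; linarith [(abs_le.1 (pbound x)).2]⟩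
  obtain ⟨Q, hQmono, hQeq⟩ := hqmono.exists_monotone_extension
    ⟨-BQ, by rintro _ ⟨x, hx, rfl⟩; linarith [(abs_le.1 (qbound x hx)).1]⟩
    ⟨BQ, by rintro _ ⟨x, hx, rfl⟩; linarith [(abs_le.1 (qbound x hx)).2]⟩
  set P' : ℝ → ℝ := fun x => max (-V) (min V (P x)) with hP'
  set Q' : ℝ → ℝ := fun x => max (-BQ) (min BQ (Q x)) with hQ'
  have hP'mono : Monotone P' := fun x y hxy =>
    max_le_max le_rfl (min_le_min le_rfl (hPmono hxy))
  have hQ'mono : Monotone Q' := fun x y hxy =>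
    max_le_max le_rfl (min_le_min le_rfl (hQmono hxy))
  have hP'lb : ∀ x, -V ≤ P' x := fun x => le_max_left _ _
  have hP'ub : ∀ x, P' x ≤ V := fun x => max_le (by linarith) (min_le_left _ _)
  have hQ'lb : ∀ x, -BQ ≤ Q' x := fun x => le_max_left _ _
  have hQ'ub : ∀ x, Q' x ≤ BQ := fun x => max_le (by linarith) (min_le_left _ _)
  have hP'S : ∀ x ∈ S, P' x = p x := by
    intro x hx
    have h1 := pbound x
    rw [hP']
    simp only
    rw [← hPeq hx, min_eq_right (abs_le.1 h1).2, max_eq_right (abs_le.1 h1).1]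
  have hQ'S : ∀ x ∈ S, Q' x = (p - f) x := by
    intro x hx
    have h1 := qbound x hx
    rw [hQ']
    simp only
    rw [← hQeq hx, min_eq_right (abs_le.1 h1).2, max_eq_right (abs_le.1 h1).1]
  refine ⟨P' - Q', ?_, ?_⟩
  · filter_upwards [hS] with x hx
    simp only [Pi.sub_apply]
    rw [hP'S x hx, hQ'S x hx]
    simp
  · have h1 := monotone_eVariationOn_le hP'mono hP'lb hP'ub
    have h2 := monotone_eVariationOn_le hQ'mono hQ'lb hQ'ub
    have h3 := eVariationOn_sub_le P' Q' Set.univ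
    exact (h3.trans_lt (lt_of_le_of_lt (add_le_add h1 h2) (by finiteness))).ne

lemma exists_bv_rep {f : ℝ → ℝ} (hm : Measurable f) (hint : Integrable f)
    {L : ℝ≥0∞} (hL : L ≠ ⊤) {r : ℕ → ℝ} (hr0 : ∀ n, 0 < r n)
    (hrlim : Tendsto r atTop (𝓝 0))
    (hvar : ∀ n, ∫⁻ s : ℝ, ENNReal.ofReal |f (s + r n) - f (s - r n)|
      ≤ L * ENNReal.ofReal (2 * r n)) :
    ∃ g : ℝ → ℝ, g =ᵐ[volume] f ∧ BoundedVariationOn g Set.univ := by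
  set F : ℕ → ℝ → ℝ := fun n x => ⨍ y in Metric.closedBall x (r n), f y with hF
  -- average as interval integral
  have havg : ∀ n x, F n x = (2 * r n)⁻¹ * ∫ s in (x - r n)..(x + r n), f s := by
    intro n x
    rw [hF]
    simp only
    rw [setAverage_eq, Real.volume_real_closedBall (by linarith [hr0 n] : (0:ℝ) ≤ r n), Real.closedBall_eq_Icc,
      smul_eq_mul, integral_Icc_eq_integral_Ioc,
      ← intervalIntegral.integral_of_le (by linarith [hr0 n] : x - r n ≤ x + r n)]
  -- difference identity
  have hdiff : ∀ n a b, a ≤ b →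
      F n b - F n a = (2 * r n)⁻¹ * ∫ s in a..b, (f (s + r n) - f (s - r n)) := by
    intro n a b _
    rw [havg, havg, ← mul_sub]
    congr 1
    rw [intervalIntegral.integral_sub ((hint.comp_add_right (r n)).intervalIntegrable)
      ((hint.comp_sub_right (r n)).intervalIntegrable),
      intervalIntegral.integral_comp_add_right, intervalIntegral.integral_comp_sub_right]
    have A := intervalIntegral.integral_add_adjacent_intervals
      (a := a - r n) (b := b - r n) (c := b + r n) (f := f) (μ := volume)
      hint.intervalIntegrable hint.intervalIntegrable
    have B := intervalIntegral.integral_add_adjacent_intervals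
      (a := a - r n) (b := a + r n) (c := b + r n) (f := f) (μ := volume)
      hint.intervalIntegrable hint.intervalIntegrable
    linarith
  -- variation bound
  have hvarF : ∀ n, eVariationOn (F n) Set.univ ≤ L := by
    intro n
    have h2r : (0:ℝ) < 2 * r n := by linarith [hr0 n]
    set φ : ℝ → ℝ≥0∞ := fun s =>
      ENNReal.ofReal ((2 * r n)⁻¹) * ENNReal.ofReal |f (s + r n) - f (s - r n)| with hφ
    have hGint : Integrable (fun s => |f (s + r n) - f (s - r n)|) :=
      ((hint.comp_add_right (r n)).sub (hint.comp_sub_right (r n))).abs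
    have hGmeas : Measurable fun s => ENNReal.ofReal |f (s + r n) - f (s - r n)| := by
      apply ENNReal.measurable_ofReal.comp
      exact ((hm.comp (measurable_add_const (r n))).sub
        (hm.comp (measurable_sub_const (r n)))).abs
    have key : eVariationOn (F n) Set.univ ≤ ∫⁻ s, φ s := by
      apply eVariationOn_le_lintegral
      intro a b hab
      have e1 : edist (F n b) (F n a) = ENNReal.ofReal |F n b - F n a| := by
        rw [edist_dist, Real.dist_eq]
      rw [e1]
      have e2 : |F n b - F n a| ≤ (2 * r n)⁻¹ * ∫ s in a..b, |f (s + r n) - f (s - r n)| := by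
        rw [hdiff n a b hab, abs_mul, abs_of_nonneg (by positivity : (0:ℝ) ≤ (2 * r n)⁻¹)]
        exact mul_le_mul_of_nonneg_left
          (intervalIntegral.abs_integral_le_integral_abs hab) (by positivity)
      refine (ENNReal.ofReal_le_ofReal e2).trans ?_
      rw [ENNReal.ofReal_mul (by positivity),
        intervalIntegral.integral_of_le hab,
        ofReal_integral_eq_lintegral_ofReal (hGint.restrict)
          (Filter.Eventually.of_forall fun s => abs_nonneg _)]
      rw [hφ]
      rw [lintegral_const_mul _ hGmeas]
    refine key.trans ?_
    have : ∫⁻ s, φ s = ENNReal.ofReal ((2 * r n)⁻¹) *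
        ∫⁻ s, ENNReal.ofReal |f (s + r n) - f (s - r n)| := by
      rw [hφ]; exact lintegral_const_mul _ hGmeas
    rw [this]
    calc ENNReal.ofReal ((2 * r n)⁻¹) * ∫⁻ s, ENNReal.ofReal |f (s + r n) - f (s - r n)|
        ≤ ENNReal.ofReal ((2 * r n)⁻¹) * (L * ENNReal.ofReal (2 * r n)) :=
          mul_le_mul_right (hvar n) _
      _ = L * (ENNReal.ofReal ((2 * r n)⁻¹) * ENNReal.ofReal (2 * r n)) := by ring
      _ = L := by
          rw [← ENNReal.ofReal_mul (by positivity), inv_mul_cancel₀ h2r.ne',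
            ENNReal.ofReal_one, mul_one]
  -- a.e. convergence
  have hae : ∀ᵐ x, Tendsto (fun n => F n x) atTop (𝓝 (f x)) := by
    have h1 := IsUnifLocDoublingMeasure.ae_tendsto_average (μ := (volume : Measure ℝ))
      hint.locallyIntegrable 1
    filter_upwards [h1] with x hx
    refine hx (fun _ => x) r ?_ (Filter.Eventually.of_forall fun n =>
      Metric.mem_closedBall_self (by linarith [hr0 n]))
    rw [tendsto_nhdsWithin_iff]
    exact ⟨hrlim, Filter.Eventually.of_forall fun n => hr0 n⟩
  set S : Set ℝ := {x | Tendsto (fun n => F n x) atTop (𝓝 (f x))} with hSdef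
  have hSae : ∀ᵐ x, x ∈ S := hae
  have hfS : eVariationOn f S ≤ L :=
    eVariationOn_le_of_tendsto (fun x hx => hx)
      (fun n => (eVariationOn.mono (F n) (Set.subset_univ S)).trans (hvarF n))
  exact bv_rep_of_ae hSae (hfS.trans_lt hL.lt_top).ne

lemma rpow_neg_half_eq (u : ℝ) (hu : 0 < u) : u ^ (-(1:ℝ)/2) = (Real.sqrt u)⁻¹ := by
  rw [Real.sqrt_eq_rpow, ← Real.rpow_neg hu.le]
  norm_num

lemma heat_lower {f : ℝ → ℝ} (hm : Measurable f) {t : ℝ} (ht : 0 < t) {C : ℝ≥0∞}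
    (hC : ENNReal.ofReal (t ^ (-(1 : ℝ) / 2)) *
        (∫⁻ x : ℝ, ∫⁻ y : ℝ, ENNReal.ofReal (heatKernel t x y * |f x - f y|)) < C) :
    ∃ h' : ℝ, Real.sqrt t ≤ h' ∧ h' ≤ 2 * Real.sqrt t ∧
      (∫⁻ x : ℝ, ENNReal.ofReal |f x - f (x - h')|) ≤
        C * ENNReal.ofReal (Real.exp 1 * Real.sqrt (4 * Real.pi)) * ENNReal.ofReal (Real.sqrt t) := by
  set st := Real.sqrt t with hstdef
  have hst : 0 < st := Real.sqrt_pos.2 ht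
  set ω : ℝ → ℝ≥0∞ := fun h' => ∫⁻ x : ℝ, ENNReal.ofReal |f x - f (x - h')| with hω
  have hucm : Measurable fun p : ℝ × ℝ => ENNReal.ofReal |f p.1 - f (p.1 - p.2)| :=
    ENNReal.measurable_ofReal.comp
      (((hm.comp measurable_fst).sub (hm.comp (measurable_fst.sub measurable_snd))).abs)
  have hxmeas : ∀ h' : ℝ, Measurable fun x : ℝ => ENNReal.ofReal |f x - f (x - h')| := by
    intro h'
    exact ENNReal.measurable_ofReal.comp ((hm.sub (hm.comp (measurable_sub_const h'))).abs)
  have hωmeas : Measurable ω := by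
    have := hucm.comp (measurable_swap (α := ℝ) (β := ℝ))
    exact Measurable.lintegral_prod_right (f := fun h' x => ENNReal.ofReal |f x - f (x - h')|) this
  set K : ℝ → ℝ := fun h' => (4 * Real.pi * t) ^ (-(1:ℝ)/2) * Real.exp (-h' ^ 2 / (4 * t)) with hK
  have hKnonneg : ∀ h', 0 ≤ K h' := by
    intro h'
    have h4 : (0:ℝ) < 4 * Real.pi * t := by positivity
    positivity
  have hKcont : Continuous K := by fun_prop
  -- rewrite the double integral
  have hswap : (∫⁻ x : ℝ, ∫⁻ y : ℝ, ENNReal.ofReal (heatKernel t x y * |f x - f y|))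
      = ∫⁻ h' : ℝ, ENNReal.ofReal (K h') * ω h' := by
    have h1 : ∀ x : ℝ, (∫⁻ y : ℝ, ENNReal.ofReal (heatKernel t x y * |f x - f y|))
        = ∫⁻ h' : ℝ, ENNReal.ofReal (K h' * |f x - f (x - h')|) := by
      intro x
      have meas : Measurable fun y : ℝ => ENNReal.ofReal (heatKernel t x y * |f x - f y|) := by
        apply ENNReal.measurable_ofReal.comp
        have hc : Continuous fun y : ℝ => heatKernel t x y := by
          unfold heatKernel; fun_prop
        exact hc.measurable.mul ((measurable_const.sub hm).abs)
      have := (Measure.measurePreserving_sub_left (volume : Measure ℝ) x).lintegral_comp meas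
      rw [← this]
      congr 1
      funext h'
      have : heatKernel t x (x - h') = K h' := by
        simp only [heatKernel, hK, sub_sub_cancel]
      rw [this]
    simp_rw [h1]
    rw [lintegral_lintegral_swap]
    · congr 1
      funext h'
      rw [hω]
      simp only
      rw [← lintegral_const_mul _ (hxmeas h')]
      congr 1
      funext x
      rw [← ENNReal.ofReal_mul (hKnonneg h')]
    · apply Measurable.aemeasurable
      apply ENNReal.measurable_ofReal.comp
      apply Measurable.mul
      · exact (hKcont.measurable).comp measurable_snd
      · exact ((hm.comp measurable_fst).sub (hm.comp (measurable_fst.sub measurable_snd))).abs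
  by_contra hcon
  push_neg at hcon
  set B : ℝ≥0∞ := C * ENNReal.ofReal (Real.exp 1 * Real.sqrt (4 * Real.pi)) *
    ENNReal.ofReal st with hB
  have hBle : ∀ h' ∈ Set.Icc st (2 * st), B ≤ ω h' := by
    intro h' hh'
    exact (hcon h' hh'.1 hh'.2).le
  -- lower bound on the Gaussian factor on the interval
  have hKlow : ∀ h' ∈ Set.Icc st (2 * st),
      (4 * Real.pi * t) ^ (-(1:ℝ)/2) * Real.exp (-1) ≤ K h' := by
    intro h' hh'
    have h4 : (0:ℝ) ≤ (4 * Real.pi * t) ^ (-(1:ℝ)/2) := by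
      have : (0:ℝ) < 4 * Real.pi * t := by positivity
      positivity
    apply mul_le_mul_of_nonneg_left _ h4
    apply Real.exp_le_exp.2
    rw [neg_div, neg_le_neg_iff]
    rw [div_le_one (by positivity)]
    have h2 : h' ≤ 2 * st := hh'.2
    have h0 : 0 ≤ h' := le_trans hst.le hh'.1
    calc h' ^ 2 ≤ (2 * st) ^ 2 := by nlinarith
      _ = 4 * t := by
          have : st ^ 2 = t := Real.sq_sqrt ht.le
          nlinarith [this]
  have main : C ≤ ENNReal.ofReal (t ^ (-(1 : ℝ) / 2)) *
      (∫⁻ x : ℝ, ∫⁻ y : ℝ, ENNReal.ofReal (heatKernel t x y * |f x - f y|)) := by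
    rw [hswap]
    have step1 : ENNReal.ofReal ((4 * Real.pi * t) ^ (-(1:ℝ)/2) * Real.exp (-1)) *
        (B * ENNReal.ofReal st) ≤ ∫⁻ h' : ℝ, ENNReal.ofReal (K h') * ω h' := by
      have s1 : (∫⁻ h' in Set.Icc st (2 * st),
          ENNReal.ofReal ((4 * Real.pi * t) ^ (-(1:ℝ)/2) * Real.exp (-1)) * B)
          ≤ ∫⁻ h' in Set.Icc st (2 * st), ENNReal.ofReal (K h') * ω h' := by
        apply setLIntegral_mono ((ENNReal.measurable_ofReal.comp hKcont.measurable).mul hωmeas)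
        intro h' hh'
        exact mul_le_mul' (ENNReal.ofReal_le_ofReal (hKlow h' hh')) (hBle h' hh')
      have s2 : (∫⁻ h' in Set.Icc st (2 * st), ENNReal.ofReal (K h') * ω h')
          ≤ ∫⁻ h' : ℝ, ENNReal.ofReal (K h') * ω h' := setLIntegral_le_lintegral _ _
      refine le_trans ?_ (s1.trans s2)
      rw [setLIntegral_const]
      rw [Real.volume_Icc]
      have : 2 * st - st = st := by ring
      rw [this]
      exact le_of_eq (by ring)
  -- final: C ≤ ofReal(t^(-1/2)) * (stuff ≥ ofReal(c1) * B * ofReal st) and product is C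
    calc C = C * ENNReal.ofReal ((t ^ (-(1:ℝ)/2)) * ((4 * Real.pi * t) ^ (-(1:ℝ)/2) * Real.exp (-1))
            * (Real.exp 1 * Real.sqrt (4 * Real.pi)) * (st * st)) := by
          have hreal : (t ^ (-(1:ℝ)/2)) * ((4 * Real.pi * t) ^ (-(1:ℝ)/2) * Real.exp (-1))
              * (Real.exp 1 * Real.sqrt (4 * Real.pi)) * (st * st) = 1 := by
            rw [rpow_neg_half_eq t ht, rpow_neg_half_eq _ (by positivity),
              Real.exp_neg, Real.sqrt_mul (by positivity) t, ← hstdef]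
            have hexp : Real.exp 1 ≠ 0 := (Real.exp_pos 1).ne'
            have hsq : Real.sqrt (4 * Real.pi) ≠ 0 := by positivity
            field_simp
          rw [hreal]
          simp
      _ ≤ ENNReal.ofReal (t ^ (-(1 : ℝ) / 2)) * ∫⁻ h' : ℝ, ENNReal.ofReal (K h') * ω h' := by
          refine le_trans (le_of_eq ?_) (mul_le_mul_right step1 (ENNReal.ofReal (t ^ (-(1 : ℝ) / 2))))
          rw [hB]
          rw [ENNReal.ofReal_mul (by positivity), ENNReal.ofReal_mul (by positivity),
            ENNReal.ofReal_mul (by positivity), ENNReal.ofReal_mul hst.le]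
          have h1 : (0:ℝ) ≤ t ^ (-(1:ℝ)/2) := by positivity
          have h2 : (0:ℝ) ≤ (4 * Real.pi * t) ^ (-(1:ℝ)/2) * Real.exp (-1) := by
            have : (0:ℝ) < 4 * Real.pi * t := by positivity
            positivity
          ring
  exact hC.not_ge main

lemma stmt_meas {f : ℝ → ℝ} (hm : Measurable f) (hint : Integrable f)
    (h : Filter.liminf (fun t : ℝ =>
          ENNReal.ofReal (t ^ (-(1 : ℝ) / 2)) *
            ∫⁻ x : ℝ, ∫⁻ y : ℝ, ENNReal.ofReal (heatKernel t x y * |f x - f y|))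
        (nhdsWithin 0 (Set.Ioi 0)) < ⊤) :
    ∃ g : ℝ → ℝ, g =ᵐ[volume] f ∧ BoundedVariationOn g Set.univ := by
  set Φ : ℝ → ℝ≥0∞ := fun t =>
    ENNReal.ofReal (t ^ (-(1 : ℝ) / 2)) *
      ∫⁻ x : ℝ, ∫⁻ y : ℝ, ENNReal.ofReal (heatKernel t x y * |f x - f y|) with hΦ
  set C : ℝ≥0∞ := Filter.liminf Φ (nhdsWithin 0 (Set.Ioi 0)) + 1 with hCdef
  have hCne : C ≠ ⊤ := ENNReal.add_ne_top.2 ⟨h.ne, ENNReal.one_ne_top⟩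
  have hCgt : Filter.liminf Φ (nhdsWithin 0 (Set.Ioi 0)) < C :=
    ENNReal.lt_add_right h.ne one_ne_zero
  have hfreq : ∃ᶠ t in nhdsWithin (0:ℝ) (Set.Ioi 0), Φ t < C :=
    frequently_lt_of_liminf_lt (by isBoundedDefault) hCgt
  have hsel : ∀ n : ℕ, ∃ t : ℝ, 0 < t ∧ t < (((n:ℝ)+1)⁻¹)^2 ∧ Φ t < C := by
    intro n
    have hev : ∀ᶠ t in nhdsWithin (0:ℝ) (Set.Ioi 0), t ∈ Set.Ioo (0:ℝ) ((((n:ℝ)+1)⁻¹)^2) :=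
      Ioo_mem_nhdsGT (by positivity)
    obtain ⟨t, h1, h2⟩ := (hfreq.and_eventually hev).exists
    exact ⟨t, h2.1, h2.2, h1⟩
  choose tt htt0 httub httC using hsel
  have hext := fun n => heat_lower hm (htt0 n) (httC n)
  choose hh hh1 hh2 hh3 using hext
  set L : ℝ≥0∞ := C * ENNReal.ofReal (Real.exp 1 * Real.sqrt (4 * Real.pi)) with hLdef
  have hLne : L ≠ ⊤ := ENNReal.mul_ne_top hCne ENNReal.ofReal_ne_top
  have hhpos : ∀ n, 0 < hh n := fun n => lt_of_lt_of_le (Real.sqrt_pos.2 (htt0 n)) (hh1 n)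
  have hsqrt_ub : ∀ n, Real.sqrt (tt n) ≤ ((n:ℝ)+1)⁻¹ := by
    intro n
    have h1 : Real.sqrt (tt n) ≤ Real.sqrt ((((n:ℝ)+1)⁻¹)^2) :=
      Real.sqrt_le_sqrt (httub n).le
    rwa [Real.sqrt_sq (by positivity)] at h1
  have hhlim : Tendsto hh atTop (𝓝 0) := by
    have hub : ∀ n, hh n ≤ 2 * ((n:ℝ)+1)⁻¹ := fun n =>
      (hh2 n).trans (by have := hsqrt_ub n; linarith)
    have hblim : Tendsto (fun n : ℕ => 2 * ((n:ℝ)+1)⁻¹) atTop (𝓝 0) := by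
      have := tendsto_one_div_add_atTop_nhds_zero_nat (𝕜 := ℝ)
      have h2 := this.const_mul (2:ℝ)
      simpa [one_div, mul_zero] using h2
    exact squeeze_zero (fun n => (hhpos n).le) hub hblim
  have hω : ∀ n, (∫⁻ x : ℝ, ENNReal.ofReal |f x - f (x - hh n)|)
      ≤ L * ENNReal.ofReal (hh n) := by
    intro n
    refine (hh3 n).trans ?_
    rw [hLdef]
    exact mul_le_mul_right (ENNReal.ofReal_le_ofReal (hh1 n)) _
  have hr0 : ∀ n, 0 < hh n / 2 := fun n => by have := hhpos n; linarith
  have hrlim : Tendsto (fun n => hh n / 2) atTop (𝓝 0) := by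
    have := hhlim.div_const (2:ℝ)
    simpa using this
  have hvar : ∀ n, (∫⁻ s : ℝ, ENNReal.ofReal |f (s + hh n / 2) - f (s - hh n / 2)|)
      ≤ L * ENNReal.ofReal (2 * (hh n / 2)) := by
    intro n
    have htr : (∫⁻ s : ℝ, ENNReal.ofReal |f (s + hh n / 2) - f (s - hh n / 2)|)
        = ∫⁻ x : ℝ, ENNReal.ofReal |f x - f (x - hh n)| := by
      have heqf : (fun s : ℝ => ENNReal.ofReal |f (s + hh n / 2) - f (s - hh n / 2)|)
          = fun s : ℝ =>
            (fun x : ℝ => ENNReal.ofReal |f x - f (x - hh n)|) (s + hh n / 2) := by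
        funext s
        simp only
        congr 2
        ring_nf
      rw [heqf]
      exact lintegral_add_right_eq_self (fun x : ℝ => ENNReal.ofReal |f x - f (x - hh n)|) _
    rw [htr]
    have : 2 * (hh n / 2) = hh n := by ring
    rw [this]
    exact hω n
  exact exists_bv_rep hm hint hLne hr0 hrlim hvar

/-- Finiteness of the liminf of the heat-kernel nonlocal functional forces membership in BV
(one-dimensional case): there is an a.e. representative of bounded pointwise variation. -/
theorem stmt_3 (f : ℝ → ℝ) (hint : Integrable f)
    (h : Filter.liminf (fun t : ℝ =>
          ENNReal.ofReal (t ^ (-(1 : ℝ) / 2)) *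
            ∫⁻ x : ℝ, ∫⁻ y : ℝ, ENNReal.ofReal (heatKernel t x y * |f x - f y|))
        (nhdsWithin 0 (Set.Ioi 0)) < ⊤) :
    ∃ g : ℝ → ℝ, g =ᵐ[volume] f ∧ BoundedVariationOn g Set.univ := by
  obtain ⟨f', hf'm, hff'⟩ : ∃ f' : ℝ → ℝ, Measurable f' ∧ f =ᵐ[volume] f' :=
    ⟨hint.1.mk f, hint.1.stronglyMeasurable_mk.measurable, hint.1.ae_eq_mk⟩
  have hint' : Integrable f' := hint.congr hff'
  have heq : ∀ t : ℝ,
      (∫⁻ x : ℝ, ∫⁻ y : ℝ, ENNReal.ofReal (heatKernel t x y * |f x - f y|))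
      = ∫⁻ x : ℝ, ∫⁻ y : ℝ, ENNReal.ofReal (heatKernel t x y * |f' x - f' y|) := by
    intro t
    apply lintegral_congr_ae
    filter_upwards [hff'] with x hx
    apply lintegral_congr_ae
    filter_upwards [hff'] with y hy
    rw [hx, hy]
  have h' : Filter.liminf (fun t : ℝ =>
          ENNReal.ofReal (t ^ (-(1 : ℝ) / 2)) *
            ∫⁻ x : ℝ, ∫⁻ y : ℝ, ENNReal.ofReal (heatKernel t x y * |f' x - f' y|))
        (nhdsWithin 0 (Set.Ioi 0)) < ⊤ := by
    have hfun : (fun t : ℝ =>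
          ENNReal.ofReal (t ^ (-(1 : ℝ) / 2)) *
            ∫⁻ x : ℝ, ∫⁻ y : ℝ, ENNReal.ofReal (heatKernel t x y * |f' x - f' y|))
        = fun t : ℝ =>
          ENNReal.ofReal (t ^ (-(1 : ℝ) / 2)) *
            ∫⁻ x : ℝ, ∫⁻ y : ℝ, ENNReal.ofReal (heatKernel t x y * |f x - f y|) := by
      funext t
      rw [heq t]
    rwa [hfun]
  obtain ⟨g, hg1, hg2⟩ := stmt_meas hf'm hint' h'
  exact ⟨g, hg1.trans hff'.symm, hg2⟩
end

section
/- Let a < b be real numbers. Then the limit as t → 0⁺ of t^(−1/2) ∬_{ℝ×ℝ} p_t(x,y) |χ_{(a,b)}(x) − χ_{(a,b)}(y)| dx dy exists and equals 4/√π, where χ_{(a,b)} denotes the characteristic function of the open interval (a,b). -/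
open MeasureTheory Real Filter

section Aux

open Set

private lemma gauss_tail' {b : ℝ} (hb : 0 < b) (A : ℝ) :
    ∫ s in Set.Ioi A, s * Real.exp (-b * s ^ 2) = Real.exp (-b * A ^ 2) / (2 * b) := by
  have hderiv : ∀ x ∈ Set.Ioi A,
      HasDerivAt (fun s : ℝ => -Real.exp (-b * s ^ 2) / (2 * b)) (x * Real.exp (-b * x ^ 2)) x := by
    intro x _
    have h1 : HasDerivAt (fun s : ℝ => -b * s ^ 2) (-b * (2 * x)) x := by
      simpa using ((hasDerivAt_pow 2 x).const_mul (-b))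
    have h2 := (h1.exp.neg).div_const (2 * b)
    convert h2 using 1
    case e'_4 => rfl
    case e'_5 => rfl
    case e'_8 => rfl
    rw [eq_div_iff (by positivity : (2 * b : ℝ) ≠ 0)]
    ring
  have hlim : Tendsto (fun s : ℝ => -Real.exp (-b * s ^ 2) / (2 * b)) atTop (nhds 0) := by
    have h1 : Tendsto (fun s : ℝ => b * s ^ 2) atTop atTop :=
      Tendsto.const_mul_atTop hb (tendsto_pow_atTop (by norm_num))
    have h2 : Tendsto (fun s : ℝ => Real.exp (-(b * s ^ 2))) atTop (nhds 0) :=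
      Real.tendsto_exp_neg_atTop_nhds_zero.comp h1
    have := (h2.neg).div_const (2 * b)
    simpa [neg_mul] using this
  have hint : IntegrableOn (fun s : ℝ => s * Real.exp (-b * s ^ 2)) (Set.Ioi A) :=
    (integrable_mul_exp_neg_mul_sq hb).integrableOn
  have := integral_Ioi_of_hasDerivAt_of_tendsto
    (Continuous.continuousWithinAt (by continuity)) hderiv hint hlim
  rw [this]
  ring

private lemma symm_diff_integral' (a b : ℝ) (hab : a < b) (u : ℝ) :
    ∫ x : ℝ, |Set.indicator (Set.Ioo a b) (fun _ => (1 : ℝ)) x -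
        Set.indicator (Set.Ioo a b) (fun _ => (1 : ℝ)) (x - u)| = 2 * min |u| (b - a) := by
  set ind := Set.indicator (Set.Ioo a b) (fun _ => (1 : ℝ)) with hind
  have key : ∀ x : ℝ, |ind x - ind (x - u)| =
      ind x + Set.indicator (Set.Ioo (a + u) (b + u)) (fun _ => (1 : ℝ)) x
        - 2 * Set.indicator (Set.Ioo a b ∩ Set.Ioo (a + u) (b + u)) (fun _ => (1 : ℝ)) x := by
    intro x
    have hmem : x - u ∈ Set.Ioo a b ↔ x ∈ Set.Ioo (a + u) (b + u) := by
      simp only [Set.mem_Ioo]; constructor <;> intro h <;> constructor <;> linarith [h.1, h.2]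
    by_cases h1 : x ∈ Set.Ioo a b <;> by_cases h2 : x ∈ Set.Ioo (a + u) (b + u) <;>
      simp [hind, Set.indicator_of_mem, Set.indicator_of_notMem, h1, h2, hmem.not,
        Set.mem_inter_iff, hmem, abs_of_nonneg] <;> norm_num
  have hvol : ∀ c d : ℝ, ∫ x : ℝ, Set.indicator (Set.Ioo c d) (fun _ => (1 : ℝ)) x
      = (volume (Set.Ioo c d)).toReal := by
    intro c d
    rw [MeasureTheory.integral_indicator_const (1 : ℝ) measurableSet_Ioo]
    simp
    rw [ENNReal.toReal_ofReal']
  have i1 : Integrable ind := by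
    rw [hind, integrable_indicator_iff measurableSet_Ioo]
    exact (integrableOn_const_iff (by simp)).2 (Or.inr measure_Ioo_lt_top)
  have i2 : Integrable (Set.indicator (Set.Ioo (a + u) (b + u)) (fun _ => (1 : ℝ))) := by
    rw [integrable_indicator_iff measurableSet_Ioo]
    exact (integrableOn_const_iff (by simp)).2 (Or.inr measure_Ioo_lt_top)
  have i3 : Integrable (Set.indicator (Set.Ioo a b ∩ Set.Ioo (a + u) (b + u))
      (fun _ => (1 : ℝ))) := by
    rw [integrable_indicator_iff (measurableSet_Ioo.inter measurableSet_Ioo)]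
    exact (integrableOn_const_iff (by simp)).2 (Or.inr (lt_of_le_of_lt
      (measure_mono Set.inter_subset_left) measure_Ioo_lt_top))
  calc ∫ x : ℝ, |ind x - ind (x - u)|
      = ∫ x : ℝ, (ind x + Set.indicator (Set.Ioo (a + u) (b + u)) (fun _ => (1 : ℝ)) x
        - 2 * Set.indicator (Set.Ioo a b ∩ Set.Ioo (a + u) (b + u)) (fun _ => (1 : ℝ)) x) := by
        exact integral_congr_ae (Filter.Eventually.of_forall key)
    _ = (∫ x : ℝ, ind x) + (∫ x : ℝ, Set.indicator (Set.Ioo (a + u) (b + u)) (fun _ => (1 : ℝ)) x)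
        - 2 * ∫ x : ℝ, Set.indicator (Set.Ioo a b ∩ Set.Ioo (a + u) (b + u))
          (fun _ => (1 : ℝ)) x := by
        have e1 : Integrable (fun x : ℝ => ind x +
            Set.indicator (Set.Ioo (a + u) (b + u)) (fun _ => (1 : ℝ)) x) := i1.add i2
        have e2 : Integrable (fun x : ℝ => 2 * Set.indicator
            (Set.Ioo a b ∩ Set.Ioo (a + u) (b + u)) (fun _ => (1 : ℝ)) x) := i3.const_mul 2
        rw [integral_sub e1 e2, integral_add i1 i2, integral_const_mul]
    _ = 2 * min |u| (b - a) := by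
        rw [hind, hvol, hvol]
        have : Set.Ioo a b ∩ Set.Ioo (a + u) (b + u) = Set.Ioo (max a (a + u)) (min b (b + u)) :=
          Set.Ioo_inter_Ioo
        rw [this]
        rw [MeasureTheory.integral_indicator_const (1 : ℝ) measurableSet_Ioo]
        simp only [measureReal_def, Real.volume_Ioo, smul_eq_mul, mul_one]
        rcases le_total u 0 with hu | hu
        · rw [abs_of_nonpos hu, max_eq_left (by linarith), min_eq_right (by linarith)]
          rcases le_total (-u) (b - a) with h | h
          · rw [min_eq_left h, ENNReal.toReal_ofReal (by linarith),
              ENNReal.toReal_ofReal (by linarith), ENNReal.toReal_ofReal (by linarith)]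
            ring
          · rw [min_eq_right h, ENNReal.toReal_ofReal (by linarith),
              ENNReal.toReal_ofReal (by linarith), ENNReal.ofReal_eq_zero.2 (by linarith)]
            simp; ring
        · rw [abs_of_nonneg hu, max_eq_right (by linarith), min_eq_left (by linarith)]
          rcases le_total u (b - a) with h | h
          · rw [min_eq_left h, ENNReal.toReal_ofReal (by linarith),
              ENNReal.toReal_ofReal (by linarith), ENNReal.toReal_ofReal (by linarith)]
            ring
          · rw [min_eq_right h, ENNReal.toReal_ofReal (by linarith),
              ENNReal.toReal_ofReal (by linarith), ENNReal.ofReal_eq_zero.2 (by linarith)]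
            simp; ring

private lemma main_eq' (a b t : ℝ) (hab : a < b) (ht : 0 < t) :
    (∫ x : ℝ, ∫ y : ℝ, heatKernel t x y *
        |Set.indicator (Set.Ioo a b) (fun _ => (1 : ℝ)) x -
          Set.indicator (Set.Ioo a b) (fun _ => (1 : ℝ)) y|) =
      ∫ u : ℝ, ((4 * Real.pi * t) ^ (-(1 : ℝ) / 2) * Real.exp (-(4 * t)⁻¹ * u ^ 2)) *
        (2 * min |u| (b - a)) := by
  set c : ℝ := (4 * Real.pi * t) ^ (-(1 : ℝ) / 2) with hc
  have hc0 : 0 ≤ c := by rw [hc]; positivity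
  set ind := Set.indicator (Set.Ioo a b) (fun _ => (1 : ℝ)) with hind
  set B : ℝ := (4 * t)⁻¹ with hB
  have hB0 : 0 < B := by rw [hB]; positivity
  have hind_nonneg : ∀ x, 0 ≤ ind x := fun x =>
    Set.indicator_nonneg (fun _ _ => zero_le_one) x
  have step1 : ∀ x : ℝ, (∫ y : ℝ, heatKernel t x y * |ind x - ind y|) =
      ∫ u : ℝ, c * Real.exp (-B * u ^ 2) * |ind x - ind (x - u)| := by
    intro x
    have := MeasureTheory.integral_sub_left_eq_self
      (fun u : ℝ => c * Real.exp (-B * u ^ 2) * |ind x - ind (x - u)|) volume x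
    rw [← this]
    refine integral_congr_ae (Filter.Eventually.of_forall fun y => ?_)
    have h1 : x - (x - y) = y := by ring
    show heatKernel t x y * |ind x - ind y|
        = c * Real.exp (-B * (x - y) ^ 2) * |ind x - ind (x - (x - y))|
    have h2 : Real.exp (-B * (x - y) ^ 2) = Real.exp (-(x - y) ^ 2 / (4 * t)) := by
      congr 1; rw [hB]; ring
    rw [h1, heatKernel, h2]
  have mInd : Measurable ind := measurable_const.indicator measurableSet_Ioo
  have hgint : Integrable (fun u : ℝ => c * Real.exp (-B * u ^ 2)) :=
    (integrable_exp_neg_mul_sq hB0).const_mul c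
  have hIndInt : Integrable ind := by
    rw [hind, integrable_indicator_iff measurableSet_Ioo]
    exact (integrableOn_const_iff (by simp)).2 (Or.inr measure_Ioo_lt_top)
  have d1 : Integrable (fun p : ℝ × ℝ => ind p.1 * (c * Real.exp (-B * p.2 ^ 2)))
      (volume.prod volume) := hIndInt.mul_prod hgint
  have d2 : Integrable (fun p : ℝ × ℝ => (c * Real.exp (-B * p.2 ^ 2)) * ind (p.1 - p.2))
      (volume.prod volume) :=
    hgint.convolution_integrand (ContinuousLinearMap.mul ℝ ℝ) hIndInt
  have hmeas : AEStronglyMeasurable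
      (fun p : ℝ × ℝ => c * Real.exp (-B * p.2 ^ 2) * |ind p.1 - ind (p.1 - p.2)|)
      (volume.prod volume) := by
    apply Measurable.aestronglyMeasurable
    have m1 : Measurable fun p : ℝ × ℝ => c * Real.exp (-B * p.2 ^ 2) :=
      (measurable_const.mul ((Real.measurable_exp.comp
        ((measurable_snd.pow_const 2).const_mul (-B)))))
    exact m1.mul ((mInd.comp measurable_fst).sub
      (mInd.comp (measurable_fst.sub measurable_snd))).abs
  have hprod : Integrable
      (Function.uncurry fun x u : ℝ => c * Real.exp (-B * u ^ 2) * |ind x - ind (x - u)|)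
      (volume.prod volume) := by
    refine (d1.add d2).mono' hmeas (Filter.Eventually.of_forall fun p => ?_)
    simp only [Function.uncurry, Pi.add_apply]
    have e0 : (0:ℝ) < Real.exp (-B * p.2 ^ 2) := Real.exp_pos _
    have habs : |ind p.1 - ind (p.1 - p.2)| ≤ ind p.1 + ind (p.1 - p.2) := by
      calc |ind p.1 - ind (p.1 - p.2)| ≤ |ind p.1| + |ind (p.1 - p.2)| := abs_sub _ _
        _ = ind p.1 + ind (p.1 - p.2) := by
            rw [abs_of_nonneg (hind_nonneg _), abs_of_nonneg (hind_nonneg _)]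
    have : ‖c * Real.exp (-B * p.2 ^ 2) * |ind p.1 - ind (p.1 - p.2)|‖
        = c * Real.exp (-B * p.2 ^ 2) * |ind p.1 - ind (p.1 - p.2)| := by
      rw [Real.norm_of_nonneg]; positivity
    rw [this]
    calc c * Real.exp (-B * p.2 ^ 2) * |ind p.1 - ind (p.1 - p.2)|
        ≤ c * Real.exp (-B * p.2 ^ 2) * (ind p.1 + ind (p.1 - p.2)) := by
          apply mul_le_mul_of_nonneg_left habs (by positivity)
      _ = ind p.1 * (c * Real.exp (-B * p.2 ^ 2))
          + c * Real.exp (-B * p.2 ^ 2) * ind (p.1 - p.2) := by ring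
  calc (∫ x : ℝ, ∫ y : ℝ, heatKernel t x y * |ind x - ind y|)
      = ∫ x : ℝ, ∫ u : ℝ, c * Real.exp (-B * u ^ 2) * |ind x - ind (x - u)| :=
        integral_congr_ae (Filter.Eventually.of_forall step1)
    _ = ∫ u : ℝ, ∫ x : ℝ, c * Real.exp (-B * u ^ 2) * |ind x - ind (x - u)| :=
        MeasureTheory.integral_integral_swap hprod
    _ = ∫ u : ℝ, (c * Real.exp (-B * u ^ 2)) * (2 * min |u| (b - a)) := by
        refine integral_congr_ae (Filter.Eventually.of_forall fun u => ?_)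
        show (∫ x : ℝ, c * Real.exp (-B * u ^ 2) * |ind x - ind (x - u)|)
            = c * Real.exp (-B * u ^ 2) * (2 * min |u| (b - a))
        rw [MeasureTheory.integral_const_mul, symm_diff_integral' a b hab u]

private lemma T_bounds' {B c L : ℝ} (hB : 0 < B) (hc : 0 ≤ c) (hL : 0 < L) :
    2 * c / B * (1 - Real.exp (-B * L ^ 2)) ≤
      (∫ u : ℝ, c * Real.exp (-B * u ^ 2) * (2 * min |u| L)) ∧
    (∫ u : ℝ, c * Real.exp (-B * u ^ 2) * (2 * min |u| L)) ≤ 2 * c / B := by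
  set ψ : ℝ → ℝ := fun s => c * Real.exp (-B * s ^ 2) * (2 * min s L) with hψ
  have habs : (fun u : ℝ => c * Real.exp (-B * u ^ 2) * (2 * min |u| L)) = fun u => ψ |u| := by
    funext u
    simp only [hψ, sq_abs]
  have hT : (∫ u : ℝ, c * Real.exp (-B * u ^ 2) * (2 * min |u| L)) = 2 * ∫ s in Set.Ioi 0, ψ s := by
    rw [habs, integral_comp_abs]
  have hφ : Integrable (fun s : ℝ => c * Real.exp (-B * s ^ 2) * (2 * s)) := by
    refine ((integrable_mul_exp_neg_mul_sq hB).const_mul (2 * c)).congr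
      (Filter.Eventually.of_forall fun s => ?_)
    ring
  have hψcont : Continuous ψ := by
    apply Continuous.mul
    · exact continuous_const.mul (Real.continuous_exp.comp (continuous_const.mul (continuous_pow 2)))
    · exact continuous_const.mul (continuous_id.min continuous_const)
  have hψint : IntegrableOn ψ (Set.Ioi 0) := by
    refine Integrable.mono' (g := fun s => (2 * L * c) * Real.exp (-B * s ^ 2))
      (((integrable_exp_neg_mul_sq hB).const_mul (2 * L * c)).integrableOn)
      hψcont.aestronglyMeasurable.restrict ?_
    rw [ae_restrict_iff' measurableSet_Ioi]
    refine Filter.Eventually.of_forall fun s hs => ?_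
    have hs0 : (0:ℝ) < s := hs
    have h1 : 0 ≤ min s L := le_min hs0.le hL.le
    have h2 : min s L ≤ L := min_le_right _ _
    rw [Real.norm_of_nonneg (by positivity)]
    calc c * Real.exp (-B * s ^ 2) * (2 * min s L)
        ≤ c * Real.exp (-B * s ^ 2) * (2 * L) := by gcongr
      _ = 2 * L * c * Real.exp (-B * s ^ 2) := by ring
  have hφval : (∫ s in Set.Ioi 0, c * Real.exp (-B * s ^ 2) * (2 * s)) = c / B := by
    have : (∫ s in Set.Ioi 0, c * Real.exp (-B * s ^ 2) * (2 * s))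
        = ∫ s in Set.Ioi 0, (2 * c) * (s * Real.exp (-B * s ^ 2)) := by
      refine setIntegral_congr_fun measurableSet_Ioi fun s _ => by ring
    rw [this, MeasureTheory.integral_const_mul, gauss_tail' hB 0]
    rw [show (-B * 0 ^ 2 : ℝ) = 0 by ring, Real.exp_zero]
    field_simp
  constructor
  · rw [hT]
    have hind : Integrable (fun s : ℝ =>
        (Set.Ioi L).indicator (fun r => r * Real.exp (-B * r ^ 2)) s) :=
      (integrable_mul_exp_neg_mul_sq hB).indicator measurableSet_Ioi
    have hlhs : Integrable (fun s : ℝ => c * Real.exp (-B * s ^ 2) * (2 * s)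
        - 2 * c * (Set.Ioi L).indicator (fun r => r * Real.exp (-B * r ^ 2)) s) :=
      hφ.sub (hind.const_mul (2 * c))
    have hle : ∀ s ∈ Set.Ioi (0:ℝ), c * Real.exp (-B * s ^ 2) * (2 * s)
        - 2 * c * (Set.Ioi L).indicator (fun r => r * Real.exp (-B * r ^ 2)) s ≤ ψ s := by
      intro s hs
      have hs0 : (0:ℝ) < s := hs
      by_cases h : s ∈ Set.Ioi L
      · have hsL : L < s := h
        rw [Set.indicator_of_mem h]
        have : min s L = L := min_eq_right hsL.le
        rw [hψ]
        simp only [this]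
        have hexp : 0 < Real.exp (-B * s ^ 2) := Real.exp_pos _
        nlinarith [mul_nonneg hc hexp.le, mul_nonneg (mul_nonneg hc hexp.le) hL.le]
      · have hsL : s ≤ L := le_of_not_gt h
        rw [Set.indicator_of_notMem h]
        have : min s L = s := min_eq_left hsL
        rw [hψ]; simp only [this]; ring_nf
        exact le_refl _
    have hmono := setIntegral_mono_on hlhs.integrableOn hψint measurableSet_Ioi hle
    have hval : (∫ s in Set.Ioi 0, (c * Real.exp (-B * s ^ 2) * (2 * s)
        - 2 * c * (Set.Ioi L).indicator (fun r => r * Real.exp (-B * r ^ 2)) s))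
        = c / B * (1 - Real.exp (-B * L ^ 2)) := by
      rw [MeasureTheory.integral_sub hφ.integrableOn (hind.const_mul (2*c)).integrableOn, hφval]
      have h1 : (∫ s in Set.Ioi 0, 2 * c * (Set.Ioi L).indicator
          (fun r => r * Real.exp (-B * r ^ 2)) s)
          = 2 * c * ∫ s in Set.Ioi 0, (Set.Ioi L).indicator
            (fun r => r * Real.exp (-B * r ^ 2)) s := MeasureTheory.integral_const_mul _ _
      rw [h1, MeasureTheory.setIntegral_indicator measurableSet_Ioi]
      rw [show Set.Ioi (0:ℝ) ∩ Set.Ioi L = Set.Ioi L by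
        rw [Set.Ioi_inter_Ioi, max_eq_right hL.le]]
      rw [gauss_tail' hB L]
      field_simp
    calc 2 * c / B * (1 - Real.exp (-B * L ^ 2))
        = 2 * (c / B * (1 - Real.exp (-B * L ^ 2))) := by ring
      _ ≤ 2 * ∫ s in Set.Ioi 0, ψ s := by
          rw [← hval]; linarith [hmono]
  · rw [hT]
    have hle : ∀ s ∈ Set.Ioi (0:ℝ), ψ s ≤ c * Real.exp (-B * s ^ 2) * (2 * s) := by
      intro s hs
      rw [hψ]
      have h1 : (2 : ℝ) * min s L ≤ 2 * s := by
        have := min_le_left s L; linarith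
      have hexp : (0:ℝ) ≤ c * Real.exp (-B * s ^ 2) := by positivity
      exact mul_le_mul_of_nonneg_left h1 hexp
    have hmono := setIntegral_mono_on hψint hφ.integrableOn measurableSet_Ioi hle
    rw [hφval] at hmono
    calc 2 * ∫ s in Set.Ioi 0, ψ s ≤ 2 * (c / B) := by linarith
      _ = 2 * c / B := by ring

private lemma key_arith' {t : ℝ} (ht : 0 < t) :
    t ^ (-(1:ℝ)/2) * (2 * ((4 * Real.pi * t) ^ (-(1:ℝ)/2)) / (4*t)⁻¹) = 4 / Real.sqrt Real.pi := by
  have hπ : (0:ℝ) < Real.pi := Real.pi_pos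
  have h1 : t ^ (-(1:ℝ)/2) = (Real.sqrt t)⁻¹ := by
    rw [show (-(1:ℝ)/2) = -(1/2) by ring, Real.rpow_neg ht.le, Real.sqrt_eq_rpow]
  have h2 : (4 * Real.pi * t) ^ (-(1:ℝ)/2) = (Real.sqrt (4 * Real.pi * t))⁻¹ := by
    rw [show (-(1:ℝ)/2) = -(1/2) by ring, Real.rpow_neg (by positivity), Real.sqrt_eq_rpow]
  have h4 : Real.sqrt 4 = 2 := by
    rw [show (4:ℝ) = 2 ^ 2 by norm_num, Real.sqrt_sq (by norm_num : (0:ℝ) ≤ 2)]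
  have h3 : Real.sqrt (4 * Real.pi * t) = 2 * Real.sqrt Real.pi * Real.sqrt t := by
    rw [Real.sqrt_mul (by positivity) t, Real.sqrt_mul (by norm_num) Real.pi, h4]
  rw [h1, h2, h3]
  have hst : Real.sqrt t ≠ 0 := ne_of_gt (Real.sqrt_pos.2 ht)
  have hsπ : Real.sqrt Real.pi ≠ 0 := ne_of_gt (Real.sqrt_pos.2 hπ)
  have hsq : Real.sqrt t * Real.sqrt t = t := Real.mul_self_sqrt ht.le
  field_simp
  nlinarith [hsq, Real.sqrt_pos.2 ht, Real.sqrt_pos.2 hπ]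

end Aux

/-- The heat-kernel nonlocal functional of the characteristic function of an interval
converges to `4/√π` (perimeter of an interval is `2`). -/
theorem stmt_4 (a b : ℝ) (hab : a < b) :
    Tendsto (fun t : ℝ => t ^ (-(1 : ℝ) / 2) *
        ∫ x : ℝ, ∫ y : ℝ, heatKernel t x y *
          |Set.indicator (Set.Ioo a b) (fun _ => (1 : ℝ)) x -
            Set.indicator (Set.Ioo a b) (fun _ => (1 : ℝ)) y|)
      (nhdsWithin 0 (Set.Ioi 0)) (nhds (4 / Real.sqrt Real.pi)) := by
  set L : ℝ := b - a with hLdef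
  have hL : 0 < L := by rw [hLdef]; linarith
  have hexp0 : Tendsto (fun t : ℝ => Real.exp (-(4 * t)⁻¹ * L ^ 2))
      (nhdsWithin 0 (Set.Ioi 0)) (nhds 0) := by
    have h1 : Tendsto (fun t : ℝ => (L ^ 2 / 4) * t⁻¹) (nhdsWithin 0 (Set.Ioi 0)) atTop :=
      Tendsto.const_mul_atTop (by positivity) tendsto_inv_nhdsGT_zero
    have h2 : Tendsto (fun t : ℝ => Real.exp (-((L ^ 2 / 4) * t⁻¹)))
        (nhdsWithin 0 (Set.Ioi 0)) (nhds 0) :=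
      Real.tendsto_exp_neg_atTop_nhds_zero.comp h1
    refine h2.congr fun t => ?_
    congr 1
    ring
  have hlo : Tendsto (fun t : ℝ => 4 / Real.sqrt Real.pi * (1 - Real.exp (-(4 * t)⁻¹ * L ^ 2)))
      (nhdsWithin 0 (Set.Ioi 0)) (nhds (4 / Real.sqrt Real.pi)) := by
    have h3 : Tendsto (fun t : ℝ => (1:ℝ) - Real.exp (-(4 * t)⁻¹ * L ^ 2))
        (nhdsWithin 0 (Set.Ioi 0)) (nhds (1 - 0)) := tendsto_const_nhds.sub hexp0
    have h4 := h3.const_mul (4 / Real.sqrt Real.pi)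
    simpa using h4
  refine tendsto_of_tendsto_of_tendsto_of_le_of_le' hlo tendsto_const_nhds ?_ ?_
  · filter_upwards [self_mem_nhdsWithin] with t ht
    have ht0 : (0:ℝ) < t := ht
    have hc0 : 0 ≤ (4 * Real.pi * t) ^ (-(1 : ℝ) / 2) := by positivity
    have hB0 : 0 < (4 * t)⁻¹ := by positivity
    have hmain := main_eq' a b t hab ht0
    have hbnd := (T_bounds' hB0 hc0 hL).1
    have htpow : 0 ≤ t ^ (-(1:ℝ)/2) := Real.rpow_nonneg ht0.le _
    rw [hmain]
    calc 4 / Real.sqrt Real.pi * (1 - Real.exp (-(4 * t)⁻¹ * L ^ 2))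
        = t ^ (-(1:ℝ)/2) * (2 * ((4 * Real.pi * t) ^ (-(1:ℝ)/2)) / (4*t)⁻¹)
          * (1 - Real.exp (-(4 * t)⁻¹ * L ^ 2)) := by rw [key_arith' ht0]
      _ = t ^ (-(1:ℝ)/2) * (2 * ((4 * Real.pi * t) ^ (-(1:ℝ)/2)) / (4*t)⁻¹
          * (1 - Real.exp (-(4 * t)⁻¹ * L ^ 2))) := by ring
      _ ≤ t ^ (-(1:ℝ)/2) * ∫ u : ℝ, ((4 * Real.pi * t) ^ (-(1 : ℝ) / 2) *
          Real.exp (-(4 * t)⁻¹ * u ^ 2)) * (2 * min |u| L) :=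
          mul_le_mul_of_nonneg_left hbnd htpow
  · filter_upwards [self_mem_nhdsWithin] with t ht
    have ht0 : (0:ℝ) < t := ht
    have hc0 : 0 ≤ (4 * Real.pi * t) ^ (-(1 : ℝ) / 2) := by positivity
    have hB0 : 0 < (4 * t)⁻¹ := by positivity
    have hmain := main_eq' a b t hab ht0
    have hbnd := (T_bounds' hB0 hc0 hL).2
    have htpow : 0 ≤ t ^ (-(1:ℝ)/2) := Real.rpow_nonneg ht0.le _
    rw [hmain]
    calc t ^ (-(1:ℝ)/2) * ∫ u : ℝ, ((4 * Real.pi * t) ^ (-(1 : ℝ) / 2) *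
          Real.exp (-(4 * t)⁻¹ * u ^ 2)) * (2 * min |u| L)
        ≤ t ^ (-(1:ℝ)/2) * (2 * ((4 * Real.pi * t) ^ (-(1:ℝ)/2)) / (4*t)⁻¹) :=
          mul_le_mul_of_nonneg_left hbnd htpow
      _ = 4 / Real.sqrt Real.pi := key_arith' ht0
end

section
/- Let a < b be real numbers. Then the limit as t → 0⁺ of t^(−1/2) ∫_a^b (1 − ∫_a^b p_t(x,y) dy) dx exists and equals 2/√π. -/
open MeasureTheory Real Filter

namespace Stmt5Aux

noncomputable def g (t u : ℝ) : ℝ :=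
  (4 * Real.pi * t) ^ (-(1 : ℝ) / 2) * Real.exp (-u ^ 2 / (4 * t))

lemma g_eq (t : ℝ) : g t = fun u =>
    (4 * Real.pi * t) ^ (-(1 : ℝ) / 2) * Real.exp (-(1 / (4 * t)) * u ^ 2) := by
  funext u
  unfold g
  congr 1
  congr 1
  ring

lemma g_cont (t : ℝ) : Continuous (g t) := by
  rw [g_eq]
  exact continuous_const.mul (Real.continuous_exp.comp (by continuity))

lemma g_nonneg {t : ℝ} (ht : 0 < t) (u : ℝ) : 0 ≤ g t u := by
  unfold g
  have : (0:ℝ) < 4 * Real.pi * t := by positivity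
  positivity

lemma g_integrable {t : ℝ} (ht : 0 < t) : Integrable (g t) := by
  rw [g_eq]
  exact (integrable_exp_neg_mul_sq (by positivity)).const_mul _

lemma C_eq {t : ℝ} (ht : 0 < t) :
    (4 * Real.pi * t) ^ (-(1 : ℝ) / 2) = (Real.sqrt (4 * Real.pi * t))⁻¹ := by
  rw [neg_div, Real.rpow_neg (by positivity), Real.sqrt_eq_rpow]

lemma g_total {t : ℝ} (ht : 0 < t) : ∫ u, g t u = 1 := by
  rw [g_eq, MeasureTheory.integral_const_mul, integral_gaussian]
  have h1 : Real.pi / (1 / (4 * t)) = 4 * Real.pi * t := by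
    field_simp
  rw [h1, C_eq ht, inv_mul_cancel₀ (by positivity)]

noncomputable def Phi (t s : ℝ) : ℝ := ∫ u in Set.Iic s, g t u

lemma Phi_hasDeriv {t : ℝ} (ht : 0 < t) (s : ℝ) : HasDerivAt (Phi t) (g t s) s := by
  have key : ∀ r : ℝ, Phi t r = Phi t 0 + ∫ u in (0:ℝ)..r, g t u := by
    intro r
    rw [← intervalIntegral.integral_Iic_sub_Iic ((g_integrable ht).integrableOn)
      ((g_integrable ht).integrableOn)]
    unfold Phi; ring
  have h : HasDerivAt (fun r : ℝ => Phi t 0 + ∫ u in (0:ℝ)..r, g t u) (g t s) s :=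
    (intervalIntegral.integral_hasDerivAt_right ((g_cont t).intervalIntegrable _ _)
      ((g_cont t).stronglyMeasurableAtFilter _ _) (g_cont t).continuousAt).const_add _
  have hF : (fun r : ℝ => Phi t 0 + ∫ u in (0:ℝ)..r, g t u) = Phi t :=
    funext fun r => (key r).symm
  rwa [hF] at h

lemma Phi_cont {t : ℝ} (ht : 0 < t) : Continuous (Phi t) :=
  continuous_iff_continuousAt.2 fun s => (Phi_hasDeriv ht s).continuousAt

lemma Phi_add_Ioi {t : ℝ} (ht : 0 < t) (s : ℝ) :
    Phi t s + ∫ u in Set.Ioi s, g t u = 1 := by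
  rw [Phi, intervalIntegral.integral_Iic_add_Ioi ((g_integrable ht).integrableOn)
    ((g_integrable ht).integrableOn), g_total ht]

lemma Phi_neg {t : ℝ} (ht : 0 < t) (s : ℝ) : Phi t (-s) = 1 - Phi t s := by
  have he : ∀ u : ℝ, g t (-u) = g t u := by intro u; simp [g, neg_sq]
  have h1 := integral_comp_neg_Iic (-s) (g t)
  simp only [he, neg_neg] at h1
  have h2 := Phi_add_Ioi ht s
  unfold Phi at *
  linarith

lemma F_eq (a b : ℝ) {t : ℝ} (ht : 0 < t) :
    (∫ x in a..b, (1 - ∫ y in a..b, heatKernel t x y))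
      = 2 * (b - a) * (1 - Phi t (b - a)) +
        4 * t * (4 * Real.pi * t) ^ (-(1 : ℝ) / 2) *
          (1 - Real.exp (-(b - a) ^ 2 / (4 * t))) := by
  set C : ℝ := (4 * Real.pi * t) ^ (-(1 : ℝ) / 2) with hC
  set L : ℝ := b - a with hLdef
  have hin : ∀ x : ℝ, (∫ y in a..b, heatKernel t x y) = Phi t (x - a) - Phi t (x - b) := by
    intro x
    have h1 : ∀ y : ℝ, heatKernel t x y = g t (x - y) := fun y => rfl
    simp only [h1]
    rw [intervalIntegral.integral_comp_sub_left (g t) x,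
      ← intervalIntegral.integral_Iic_sub_Iic ((g_integrable ht).integrableOn)
        ((g_integrable ht).integrableOn)]
    rfl
  simp only [hin]
  have hPc := Phi_cont ht
  have i1 : IntervalIntegrable (fun x => Phi t (x - a)) volume a b :=
    (hPc.comp (by continuity)).intervalIntegrable _ _
  have i2 : IntervalIntegrable (fun x => Phi t (x - b)) volume a b :=
    (hPc.comp (by continuity)).intervalIntegrable _ _
  rw [intervalIntegral.integral_sub intervalIntegrable_const (i1.sub i2),
    intervalIntegral.integral_sub i1 i2, intervalIntegral.integral_const,
    intervalIntegral.integral_comp_sub_right (f := Phi t) a,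
    intervalIntegral.integral_comp_sub_right (f := Phi t) b]
  simp only [sub_self]
  have h2 : (∫ x in (a - b)..(0:ℝ), Phi t x) = ∫ u in (0:ℝ)..L, (1 - Phi t u) := by
    have h3 : (∫ u in (0:ℝ)..L, Phi t (-u)) = ∫ x in (-L)..(-0:ℝ), Phi t x :=
      intervalIntegral.integral_comp_neg (f := Phi t)
    simp only [neg_zero] at h3
    rw [show a - b = -L by rw [hLdef]; ring, ← h3]
    apply intervalIntegral.integral_congr
    intro u _
    exact Phi_neg ht u
  rw [h2]
  have iP : IntervalIntegrable (Phi t) volume 0 L := hPc.intervalIntegrable _ _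
  have iOne : IntervalIntegrable (fun _ : ℝ => (1:ℝ)) volume 0 L := intervalIntegrable_const
  have hKJ : (∫ u in (0:ℝ)..L, Phi t u) + (∫ u in (0:ℝ)..L, (1 - Phi t u)) = L := by
    rw [← intervalIntegral.integral_add iP (iOne.sub iP)]
    simp [intervalIntegral.integral_const]
  have hibp : (∫ u in (0:ℝ)..L, (1 - Phi t u) * 1)
      = (1 - Phi t L) * L - (1 - Phi t 0) * 0 - ∫ u in (0:ℝ)..L, (-(g t u)) * u := by
    apply intervalIntegral.integral_mul_deriv_eq_deriv_mul
      (u := fun s => 1 - Phi t s) (v := fun s => s)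
      (u' := fun s => -(g t s)) (v' := fun _ => (1:ℝ))
    · intro x _
      simpa using (Phi_hasDeriv ht x).const_sub 1
    · intro x _
      exact hasDerivAt_id' x
    · exact ((g_cont t).neg).intervalIntegrable _ _
    · exact intervalIntegrable_const
  simp only [mul_one, mul_zero, sub_zero] at hibp
  have hexp : ∀ x : ℝ, HasDerivAt (fun u : ℝ => 2 * t * C * Real.exp (-u ^ 2 / (4 * t)))
      (-(g t x) * x) x := by
    intro x
    have h1 : HasDerivAt (fun u : ℝ => -u ^ 2 / (4 * t)) (-(2 * x) / (4 * t)) x := by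
      have := ((hasDerivAt_pow 2 x).neg).div_const (4 * t)
      simpa using this
    have h2 := (Real.hasDerivAt_exp (-x ^ 2 / (4 * t))).comp x h1
    have h3 := h2.const_mul (2 * t * C)
    convert h3 using 1
    show -(g t x) * x = 2 * t * C * (Real.exp (-x ^ 2 / (4 * t)) * (-(2 * x) / (4 * t)))
    unfold g
    rw [← hC]
    field_simp
    ring
    all_goals rfl
  have hval : (∫ u in (0:ℝ)..L, (-(g t u)) * u)
      = 2 * t * C * Real.exp (-L ^ 2 / (4 * t)) - 2 * t * C := by
    have := intervalIntegral.integral_eq_sub_of_hasDerivAt (a := (0:ℝ)) (b := L)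
      (fun x _ => hexp x)
      ((((g_cont t).neg).mul continuous_id).intervalIntegrable _ _)
    rw [this]
    norm_num
  rw [hibp] at hKJ ⊢
  rw [hval] at hKJ ⊢
  have hP0 : (∫ u in (0:ℝ)..L, Phi t u)
      = L - ((1 - Phi t L) * L - (2 * t * C * Real.exp (-L ^ 2 / (4 * t)) - 2 * t * C)) := by
    linarith
  rw [hP0]
  simp only [smul_eq_mul]
  ring

lemma sqrt_four : Real.sqrt 4 = 2 := by
  rw [show (4:ℝ) = 2 ^ 2 by norm_num, Real.sqrt_sq (by norm_num : (0:ℝ) ≤ 2)]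

lemma tail_le {t L : ℝ} (ht : 0 < t) (hL : 0 < L) :
    (∫ u in Set.Ioi L, g t u) ≤ Real.sqrt 2 * Real.exp (-L ^ 2 / (8 * t)) := by
  set C : ℝ := (4 * Real.pi * t) ^ (-(1 : ℝ) / 2) with hC
  have h8 : (0:ℝ) < 1 / (8 * t) := by positivity
  have hbint : Integrable (fun u : ℝ => Real.exp (-L ^ 2 / (8 * t)) *
      (C * Real.exp (-(1 / (8 * t)) * u ^ 2))) :=
    ((integrable_exp_neg_mul_sq h8).const_mul C).const_mul _
  have hb : ∀ u ∈ Set.Ioi L, g t u ≤ Real.exp (-L ^ 2 / (8 * t)) *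
      (C * Real.exp (-(1 / (8 * t)) * u ^ 2)) := by
    intro u hu
    have hu' : L < u := hu
    have hLu : L ^ 2 ≤ u ^ 2 := by nlinarith
    have e1 : Real.exp (-u ^ 2 / (4 * t)) =
        Real.exp (-u ^ 2 / (8 * t)) * Real.exp (-(1 / (8 * t)) * u ^ 2) := by
      rw [← Real.exp_add]; congr 1; field_simp; ring
    have e2 : Real.exp (-u ^ 2 / (8 * t)) ≤ Real.exp (-L ^ 2 / (8 * t)) := by
      apply Real.exp_le_exp.2
      rw [div_le_div_iff_of_pos_right (by positivity)]
      linarith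
    show C * Real.exp (-u ^ 2 / (4 * t)) ≤ _
    rw [e1]
    have hCpos : 0 ≤ C := by rw [hC, C_eq ht]; positivity
    have h3 : (0:ℝ) ≤ Real.exp (-(1 / (8 * t)) * u ^ 2) := (Real.exp_pos _).le
    nlinarith [mul_le_mul_of_nonneg_left (mul_le_mul_of_nonneg_right e2 h3) hCpos]
  calc (∫ u in Set.Ioi L, g t u)
      ≤ ∫ u in Set.Ioi L, Real.exp (-L ^ 2 / (8 * t)) *
          (C * Real.exp (-(1 / (8 * t)) * u ^ 2)) :=
        setIntegral_mono_on ((g_integrable ht).integrableOn) hbint.integrableOn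
          measurableSet_Ioi hb
    _ ≤ ∫ u, Real.exp (-L ^ 2 / (8 * t)) * (C * Real.exp (-(1 / (8 * t)) * u ^ 2)) :=
        setIntegral_le_integral hbint (Filter.Eventually.of_forall fun u => by positivity)
    _ = Real.exp (-L ^ 2 / (8 * t)) * (C * Real.sqrt (Real.pi / (1 / (8 * t)))) := by
        rw [MeasureTheory.integral_const_mul, MeasureTheory.integral_const_mul, integral_gaussian]
    _ ≤ Real.sqrt 2 * Real.exp (-L ^ 2 / (8 * t)) := by
        have h1 : Real.pi / (1 / (8 * t)) = 2 * (4 * Real.pi * t) := by field_simp; ring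
        rw [h1, Real.sqrt_mul (by norm_num : (0:ℝ) ≤ 2), hC, C_eq ht]
        apply le_of_eq
        have hne : Real.sqrt (4 * Real.pi * t) ≠ 0 := by positivity
        field_simp

end Stmt5Aux

open Stmt5Aux in
/-- `lim t^{-1/2} ∫ (χ_E − h_t χ_E) χ_E = (1/√π)|Dχ_E|` for `E = (a,b)` in `ℝ`. -/
theorem stmt_5 (a b : ℝ) (hab : a < b) :
    Tendsto (fun t : ℝ => t ^ (-(1 : ℝ) / 2) *
        ∫ x in a..b, (1 - ∫ y in a..b, heatKernel t x y))
      (nhdsWithin 0 (Set.Ioi 0)) (nhds (2 / Real.sqrt Real.pi)) := by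
  set L : ℝ := b - a with hLdef
  have hL : 0 < L := sub_pos.2 hab
  have hcoef : ∀ t : ℝ, 0 < t →
      t ^ (-(1:ℝ)/2) * (4 * t * (4 * Real.pi * t) ^ (-(1:ℝ)/2)) = 2 / Real.sqrt Real.pi := by
    intro t ht
    rw [C_eq ht, neg_div, Real.rpow_neg ht.le, ← Real.sqrt_eq_rpow]
    have h4 : Real.sqrt (4 * Real.pi * t) = 2 * Real.sqrt Real.pi * Real.sqrt t := by
      rw [show 4 * Real.pi * t = 4 * (Real.pi * t) by ring,
        Real.sqrt_mul (by norm_num : (0:ℝ) ≤ 4), sqrt_four, Real.sqrt_mul Real.pi_pos.le]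
      ring
    rw [h4]
    have hts : Real.sqrt t * Real.sqrt t = t := Real.mul_self_sqrt ht.le
    have h1 : Real.sqrt t ≠ 0 := by positivity
    have h2 : Real.sqrt Real.pi ≠ 0 := by positivity
    field_simp
    nlinarith [hts, Real.sq_sqrt ht.le, Real.sqrt_nonneg t, Real.sqrt_nonneg Real.pi]
  -- first term tends to 0
  have hφ1 : Tendsto (fun t : ℝ => 2 * L * (t ^ (-(1:ℝ)/2) * (1 - Phi t L)))
      (nhdsWithin 0 (Set.Ioi 0)) (nhds 0) := by
    have hbase : Tendsto (fun x : ℝ => x ^ ((1:ℝ)/2) * Real.exp (-(L^2/8) * x))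
        atTop (nhds 0) :=
      tendsto_rpow_mul_exp_neg_mul_atTop_nhds_zero _ _ (by positivity)
    have hcomp : Tendsto (fun t : ℝ => (t⁻¹) ^ ((1:ℝ)/2) * Real.exp (-(L^2/8) * t⁻¹))
        (nhdsWithin 0 (Set.Ioi 0)) (nhds 0) := hbase.comp tendsto_inv_nhdsGT_zero
    have hBound : Tendsto (fun t : ℝ => 2 * L * Real.sqrt 2 *
        ((t⁻¹) ^ ((1:ℝ)/2) * Real.exp (-(L^2/8) * t⁻¹)))
        (nhdsWithin 0 (Set.Ioi 0)) (nhds 0) := by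
      simpa using hcomp.const_mul (2 * L * Real.sqrt 2)
    apply squeeze_zero' _ _ hBound
    · filter_upwards [self_mem_nhdsWithin] with t htm
      have ht : 0 < t := htm
      have h1 : 0 ≤ 1 - Phi t L := by
        have h := Phi_add_Ioi ht L
        have h2 : 0 ≤ ∫ u in Set.Ioi L, g t u :=
          setIntegral_nonneg measurableSet_Ioi fun u _ => g_nonneg ht u
        linarith
      have h2 : (0:ℝ) ≤ t ^ (-(1:ℝ)/2) := Real.rpow_nonneg ht.le _
      exact mul_nonneg (by positivity) (mul_nonneg h2 h1)
    · filter_upwards [self_mem_nhdsWithin] with t htm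
      have ht : 0 < t := htm
      have htail : 1 - Phi t L ≤ Real.sqrt 2 * Real.exp (-L^2/(8*t)) := by
        have h := Phi_add_Ioi ht L
        have h' := tail_le ht hL
        linarith
      have hrw : (t⁻¹) ^ ((1:ℝ)/2) = t ^ (-(1:ℝ)/2) := by
        rw [Real.inv_rpow ht.le, ← Real.rpow_neg ht.le]
        norm_num
      have hexp : Real.exp (-(L^2/8) * t⁻¹) = Real.exp (-L^2/(8*t)) := by
        congr 1; ring
      calc 2 * L * (t ^ (-(1:ℝ)/2) * (1 - Phi t L))
          ≤ 2 * L * (t ^ (-(1:ℝ)/2) * (Real.sqrt 2 * Real.exp (-L^2/(8*t)))) := by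
            apply mul_le_mul_of_nonneg_left _ (by positivity)
            exact mul_le_mul_of_nonneg_left htail (Real.rpow_nonneg ht.le _)
        _ = 2 * L * Real.sqrt 2 * ((t⁻¹) ^ ((1:ℝ)/2) * Real.exp (-(L^2/8) * t⁻¹)) := by
            rw [hrw, hexp]; ring
  -- second term
  have hexp2 : Tendsto (fun t : ℝ => Real.exp (-L^2/(4*t)))
      (nhdsWithin 0 (Set.Ioi 0)) (nhds 0) := by
    have h1 : Tendsto (fun t : ℝ => -(L^2/4 * t⁻¹)) (nhdsWithin 0 (Set.Ioi 0)) atBot := by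
      apply tendsto_neg_atBot_iff.2
      exact tendsto_inv_nhdsGT_zero.const_mul_atTop (by positivity)
    have h2 := Real.tendsto_exp_atBot.comp h1
    exact h2.congr fun t => by
      simp only [Function.comp_apply]; congr 1; ring
  have hφ2 : Tendsto (fun t : ℝ => 2 / Real.sqrt Real.pi * (1 - Real.exp (-L^2/(4*t))))
      (nhdsWithin 0 (Set.Ioi 0)) (nhds (2 / Real.sqrt Real.pi)) := by
    have h := ((tendsto_const_nhds (x := (1:ℝ))
      (f := nhdsWithin (0:ℝ) (Set.Ioi 0))).sub hexp2).const_mul (2 / Real.sqrt Real.pi)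
    simpa using h
  have hsum := hφ1.add hφ2
  rw [zero_add] at hsum
  apply hsum.congr'
  filter_upwards [self_mem_nhdsWithin] with t htm
  have ht : 0 < t := htm
  rw [F_eq a b ht, ← hLdef, mul_add]
  congr 1
  · ring
  · rw [← hcoef t ht]; ring
end

section
/- Let a < b < c be real numbers. Then the limit as t → 0⁺ of t^(−1/2) ∫_b^c ∫_a^b p_t(x,y) dy dx exists and equals 1/√π. -/
open MeasureTheory Real Filter

namespace HKaux

noncomputable def C (t : ℝ) : ℝ := (4 * Real.pi * t) ^ (-(1:ℝ)/2)
noncomputable def k (t u : ℝ) : ℝ := C t * Real.exp (-u^2 / (4*t))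
noncomputable def Phi (t z : ℝ) : ℝ := ∫ u in (0:ℝ)..z, k t u
noncomputable def Psi (t z : ℝ) : ℝ := z * Phi t z + 2 * t * C t * Real.exp (-z^2/(4*t))

lemma C_nonneg {t : ℝ} (ht : 0 < t) : 0 ≤ C t := Real.rpow_nonneg (by positivity) _

lemma k_cont (t : ℝ) : Continuous (k t) := by unfold k; continuity

lemma k_intInt (t p q : ℝ) : IntervalIntegrable (k t) volume p q :=
  (k_cont t).intervalIntegrable p q

lemma hasDerivAt_Phi (t z : ℝ) : HasDerivAt (Phi t) (k t z) z :=
  intervalIntegral.integral_hasDerivAt_right (k_intInt t 0 z)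
    ((k_cont t).stronglyMeasurableAtFilter _ _) (k_cont t).continuousAt

lemma cont_Phi (t : ℝ) : Continuous (Phi t) :=
  continuous_iff_continuousAt.2 fun z => (hasDerivAt_Phi t z).continuousAt

lemma hasDerivAt_Psi {t : ℝ} (ht : 0 < t) (z : ℝ) :
    HasDerivAt (Psi t) (Phi t z) z := by
  have h1 : HasDerivAt (fun z => z * Phi t z) (1 * Phi t z + z * k t z) z :=
    (hasDerivAt_id z).mul (hasDerivAt_Phi t z)
  have h2 : HasDerivAt (fun z : ℝ => -z^2/(4*t)) (-(2*z^1)/(4*t)) z :=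
    ((hasDerivAt_pow 2 z).neg.div_const (4*t)).congr_deriv (by push_cast; ring)
  have h3 : HasDerivAt (fun z : ℝ => 2 * t * C t * Real.exp (-z^2/(4*t)))
      (2 * t * C t * (Real.exp (-z^2/(4*t)) * (-(2*z^1)/(4*t)))) z :=
    (h2.exp).const_mul _
  refine (h1.add h3).congr_deriv ?_
  unfold k
  field_simp
  ring

lemma inner_eq (t x a b : ℝ) :
    (∫ y in a..b, heatKernel t x y) = Phi t (x-a) - Phi t (x-b) := by
  have h : (∫ y in a..b, heatKernel t x y) = ∫ y in a..b, k t (x - y) :=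
    intervalIntegral.integral_congr (fun y _ => by simp [heatKernel, k, C])
  rw [h, intervalIntegral.integral_comp_sub_left (k t) x, Phi, Phi,
    intervalIntegral.integral_interval_sub_left (k_intInt t 0 (x-a)) (k_intInt t 0 (x-b))]

lemma outer_eq {t : ℝ} (ht : 0 < t) (a b c : ℝ) :
    (∫ x in b..c, (Phi t (x-a) - Phi t (x-b))) =
      Psi t (c-a) - Psi t (c-b) - Psi t (b-a) + Psi t 0 := by
  have hd : ∀ x ∈ Set.uIcc b c, HasDerivAt (fun x => Psi t (x-a) - Psi t (x-b))
      (Phi t (x-a) - Phi t (x-b)) x := by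
    intro x _
    have h1 : HasDerivAt (fun x : ℝ => Psi t (x-a)) (Phi t (x-a) * 1) x :=
      by have := (hasDerivAt_Psi ht (x-a)).comp x ((hasDerivAt_id' x).sub_const a); exact this
    have h2 : HasDerivAt (fun x : ℝ => Psi t (x-b)) (Phi t (x-b) * 1) x :=
      by have := (hasDerivAt_Psi ht (x-b)).comp x ((hasDerivAt_id' x).sub_const b); exact this
    exact (h1.sub h2).congr_deriv (by ring)
  have hint : IntervalIntegrable (fun x => Phi t (x-a) - Phi t (x-b)) volume b c :=
    (((cont_Phi t).comp (by continuity)).sub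
      ((cont_Phi t).comp (by continuity))).intervalIntegrable _ _
  rw [intervalIntegral.integral_eq_sub_of_hasDerivAt hd hint]
  simp only [sub_self]
  ring

lemma Psi_zero {t : ℝ} : Psi t 0 = 2 * t * C t := by simp [Psi]

lemma const_eq {t : ℝ} (ht : 0 < t) :
    t ^ (-(1:ℝ)/2) * (2 * t * C t) = 1 / Real.sqrt Real.pi := by
  have hs : Real.sqrt Real.pi ≠ 0 := by positivity
  have h4 : ((4:ℝ) * Real.pi) ^ (-(1:ℝ)/2) = 1 / (2 * Real.sqrt Real.pi) := by
    rw [show (-(1:ℝ)/2) = -(1/2) by ring, Real.rpow_neg (by positivity), ← Real.sqrt_eq_rpow,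
      show (4:ℝ) * Real.pi = 2^2 * Real.pi by ring, Real.sqrt_mul (by positivity),
      Real.sqrt_sq (by norm_num)]
    simp [one_div]
  have hC : C t = ((4:ℝ)*Real.pi) ^ (-(1:ℝ)/2) * t ^ (-(1:ℝ)/2) := by
    rw [C, show (4:ℝ) * Real.pi * t = (4*Real.pi) * t by ring,
      Real.mul_rpow (by positivity) ht.le]
  have htt : t ^ (-(1:ℝ)/2) * t ^ (-(1:ℝ)/2) = t⁻¹ := by
    rw [← Real.rpow_add ht, show (-(1:ℝ)/2 + -(1:ℝ)/2) = -1 by ring, Real.rpow_neg_one]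
  calc t ^ (-(1:ℝ)/2) * (2 * t * C t)
      = 2 * t * (((4:ℝ)*Real.pi) ^ (-(1:ℝ)/2)) * (t ^ (-(1:ℝ)/2) * t ^ (-(1:ℝ)/2)) := by
        rw [hC]; ring
    _ = 2 * (t * t⁻¹) * (1 / (2 * Real.sqrt Real.pi)) := by rw [htt, h4]; ring
    _ = 1 / Real.sqrt Real.pi := by rw [mul_inv_cancel₀ ht.ne']; field_simp

lemma exp_mono {t p u : ℝ} (ht : 0 < t) (hp : 0 ≤ p) (hpu : p ≤ u) :
    Real.exp (-u^2/(4*t)) ≤ Real.exp (-p^2/(4*t)) := by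
  apply Real.exp_le_exp.2
  apply (div_le_div_iff_of_pos_right (by linarith)).2
  nlinarith

lemma Phi_diff_bound {t p q : ℝ} (ht : 0 < t) (hp : 0 ≤ p) (hpq : p ≤ q) :
    |Phi t q - Phi t p| ≤ C t * Real.exp (-p^2/(4*t)) * (q - p) := by
  rw [Phi, Phi, intervalIntegral.integral_interval_sub_left (k_intInt t 0 q) (k_intInt t 0 p)]
  have h := intervalIntegral.norm_integral_le_of_norm_le_const
      (a := p) (b := q) (C := C t * Real.exp (-p^2/(4*t))) (f := k t) ?_
  · rw [abs_of_nonneg (sub_nonneg.2 hpq)] at h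
    rwa [Real.norm_eq_abs] at h
  · intro u hu
    rw [Set.uIoc_of_le hpq] at hu
    rw [Real.norm_eq_abs, k, abs_of_nonneg (mul_nonneg (C_nonneg ht) (Real.exp_nonneg _))]
    exact mul_le_mul_of_nonneg_left (exp_mono ht hp hu.1.le) (C_nonneg ht)

lemma Psi_err {t d1 d2 : ℝ} (ht : 0 < t) (h1 : 0 < d1) (h2 : 0 < d2) :
    |Psi t (d1+d2) - Psi t d1 - Psi t d2| ≤
      C t * Real.exp (-(min d1 d2)^2/(4*t)) * (2*d1*d2 + 6*t) := by
  set m := min d1 d2 with hm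
  have hm1 : m ≤ d1 := min_le_left _ _
  have hm2 : m ≤ d2 := min_le_right _ _
  have hm0 : 0 ≤ m := le_min h1.le h2.le
  set em := Real.exp (-m^2/(4*t)) with hem
  have emn : 0 ≤ em := Real.exp_nonneg _
  have e1 : Real.exp (-d1^2/(4*t)) ≤ em := exp_mono ht hm0 hm1
  have e2 : Real.exp (-d2^2/(4*t)) ≤ em := exp_mono ht hm0 hm2
  have e0 : Real.exp (-(d1+d2)^2/(4*t)) ≤ em := exp_mono ht hm0 (by linarith)
  have hCn : 0 ≤ C t := C_nonneg ht
  have hb1 : |Phi t (d1+d2) - Phi t d1| ≤ C t * em * d2 := by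
    have h := Phi_diff_bound ht h1.le (by linarith : d1 ≤ d1+d2)
    rw [show d1+d2-d1 = d2 by ring] at h
    exact h.trans (mul_le_mul_of_nonneg_right (mul_le_mul_of_nonneg_left e1 hCn) h2.le)
  have hb2 : |Phi t (d1+d2) - Phi t d2| ≤ C t * em * d1 := by
    have h := Phi_diff_bound ht h2.le (by linarith : d2 ≤ d1+d2)
    rw [show d1+d2-d2 = d1 by ring] at h
    exact h.trans (mul_le_mul_of_nonneg_right (mul_le_mul_of_nonneg_left e2 hCn) h1.le)
  have key : Psi t (d1+d2) - Psi t d1 - Psi t d2 =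
      d1 * (Phi t (d1+d2) - Phi t d1) + d2 * (Phi t (d1+d2) - Phi t d2)
      + 2*t*C t*(Real.exp (-(d1+d2)^2/(4*t)) - Real.exp (-d1^2/(4*t))
        - Real.exp (-d2^2/(4*t))) := by
    simp only [Psi]; ring
  rw [key]
  have hD : |Real.exp (-(d1+d2)^2/(4*t)) - Real.exp (-d1^2/(4*t))
      - Real.exp (-d2^2/(4*t))| ≤ 3 * em := by
    have p0 := Real.exp_nonneg (-(d1+d2)^2/(4*t))
    have p1 := Real.exp_nonneg (-d1^2/(4*t))
    have p2 := Real.exp_nonneg (-d2^2/(4*t))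
    rw [abs_le]
    constructor <;> nlinarith
  calc |d1 * (Phi t (d1+d2) - Phi t d1) + d2 * (Phi t (d1+d2) - Phi t d2)
      + 2*t*C t*(Real.exp (-(d1+d2)^2/(4*t)) - Real.exp (-d1^2/(4*t))
        - Real.exp (-d2^2/(4*t)))|
      ≤ |d1 * (Phi t (d1+d2) - Phi t d1)| + |d2 * (Phi t (d1+d2) - Phi t d2)|
        + |2*t*C t*(Real.exp (-(d1+d2)^2/(4*t)) - Real.exp (-d1^2/(4*t))
        - Real.exp (-d2^2/(4*t)))| := abs_add_three _ _ _
    _ ≤ d1 * (C t * em * d2) + d2 * (C t * em * d1) + 2*t*C t * (3*em) := by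
        have t1 : |d1 * (Phi t (d1+d2) - Phi t d1)| ≤ d1 * (C t * em * d2) := by
          rw [abs_mul, abs_of_nonneg h1.le]
          exact mul_le_mul_of_nonneg_left hb1 h1.le
        have t2 : |d2 * (Phi t (d1+d2) - Phi t d2)| ≤ d2 * (C t * em * d1) := by
          rw [abs_mul, abs_of_nonneg h2.le]
          exact mul_le_mul_of_nonneg_left hb2 h2.le
        have t3 : |2*t*C t*(Real.exp (-(d1+d2)^2/(4*t)) - Real.exp (-d1^2/(4*t))
            - Real.exp (-d2^2/(4*t)))| ≤ 2*t*C t * (3*em) := by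
          rw [abs_mul, abs_of_nonneg (by positivity : (0:ℝ) ≤ 2*t*C t)]
          exact mul_le_mul_of_nonneg_left hD (by positivity)
        linarith
    _ = C t * em * (2*d1*d2 + 6*t) := by ring

lemma tendsto_inv_mul_exp {e : ℝ} (he : 0 < e) :
    Tendsto (fun t : ℝ => t⁻¹ * Real.exp (-(e / t))) (nhdsWithin 0 (Set.Ioi 0)) (nhds 0) := by
  have h3 : Tendsto (fun s : ℝ => e * s) atTop atTop := Tendsto.const_mul_atTop he tendsto_id
  have h4 := ((tendsto_pow_mul_exp_neg_atTop_nhds_zero 1).comp h3).const_mul e⁻¹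
  rw [mul_zero] at h4
  have h1 : Tendsto (fun s : ℝ => s * Real.exp (-(e * s))) atTop (nhds 0) := by
    refine h4.congr fun s => ?_
    simp only [Function.comp]
    rw [pow_one, ← mul_assoc, inv_mul_cancel_left₀ he.ne']
  have h2 := h1.comp tendsto_inv_nhdsGT_zero
  refine h2.congr fun t => ?_
  simp only [Function.comp]
  rw [div_eq_mul_inv]

end HKaux

open HKaux in
/-- Bilinear limit formula for the adjacent intervals `E = (a,b)`, `F = (b,c)`. -/
theorem stmt_6 (a b c : ℝ) (hab : a < b) (hbc : b < c) :
    Tendsto (fun t : ℝ => t ^ (-(1 : ℝ) / 2) *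
        ∫ x in b..c, ∫ y in a..b, heatKernel t x y)
      (nhdsWithin 0 (Set.Ioi 0)) (nhds (1 / Real.sqrt Real.pi)) := by
  set d1 : ℝ := b - a with hd1
  set d2 : ℝ := c - b with hd2
  have hd1p : 0 < d1 := by simp [hd1]; linarith
  have hd2p : 0 < d2 := by simp [hd2]; linarith
  set m : ℝ := min d1 d2 with hmm
  have hmp : 0 < m := lt_min hd1p hd2p
  -- error term
  set E : ℝ → ℝ := fun t => t ^ (-(1:ℝ)/2) * (Psi t (d1+d2) - Psi t d1 - Psi t d2) with hE
  -- the main pointwise identity on (0, ∞)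
  have hidentity : ∀ t ∈ Set.Ioi (0:ℝ),
      t ^ (-(1:ℝ)/2) * ∫ x in b..c, ∫ y in a..b, heatKernel t x y
        = 1 / Real.sqrt Real.pi + E t := by
    intro t ht
    rw [Set.mem_Ioi] at ht
    have hinner : (∫ x in b..c, ∫ y in a..b, heatKernel t x y)
        = ∫ x in b..c, (Phi t (x-a) - Phi t (x-b)) :=
      intervalIntegral.integral_congr (fun x _ => inner_eq t x a b)
    rw [hinner, outer_eq ht a b c, Psi_zero]
    have hca : c - a = d1 + d2 := by rw [hd1, hd2]; ring
    have hcb : c - b = d2 := rfl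
    have hba : b - a = d1 := rfl
    rw [hca, hcb, hba, hE]
    have := const_eq (t := t) ht
    calc t ^ (-(1:ℝ)/2) * (Psi t (d1+d2) - Psi t d2 - Psi t d1 + 2 * t * C t)
        = t ^ (-(1:ℝ)/2) * (2 * t * C t)
          + t ^ (-(1:ℝ)/2) * (Psi t (d1+d2) - Psi t d1 - Psi t d2) := by ring
      _ = 1 / Real.sqrt Real.pi
          + t ^ (-(1:ℝ)/2) * (Psi t (d1+d2) - Psi t d1 - Psi t d2) := by rw [this]
  -- the error tends to zero
  have herr : Tendsto E (nhdsWithin 0 (Set.Ioi 0)) (nhds 0) := by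
    -- bound ‖E t‖ eventually
    have hbound : ∀ t ∈ Set.Ioi (0:ℝ), ‖E t‖ ≤
        ((4*Real.pi) ^ (-(1:ℝ)/2)) * (t⁻¹ * Real.exp (-(m^2/4 / t))) * (2*d1*d2 + 6*t) := by
      intro t ht
      rw [Set.mem_Ioi] at ht
      have htp : (0:ℝ) < t ^ (-(1:ℝ)/2) := Real.rpow_pos_of_pos ht _
      have hPsiE := Psi_err ht hd1p hd2p
      rw [hE]
      simp only [Real.norm_eq_abs, abs_mul, abs_of_pos htp]
      have step1 : t ^ (-(1:ℝ)/2) * |Psi t (d1+d2) - Psi t d1 - Psi t d2|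
          ≤ t ^ (-(1:ℝ)/2) * (C t * Real.exp (-m^2/(4*t)) * (2*d1*d2 + 6*t)) :=
        mul_le_mul_of_nonneg_left hPsiE htp.le
      refine step1.trans_eq ?_
      have hC : C t = ((4:ℝ)*Real.pi) ^ (-(1:ℝ)/2) * t ^ (-(1:ℝ)/2) := by
        rw [C, show (4:ℝ) * Real.pi * t = (4*Real.pi) * t by ring,
          Real.mul_rpow (by positivity) ht.le]
      have htt : t ^ (-(1:ℝ)/2) * t ^ (-(1:ℝ)/2) = t⁻¹ := by
        rw [← Real.rpow_add ht, show (-(1:ℝ)/2 + -(1:ℝ)/2) = -1 by ring, Real.rpow_neg_one]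
      have hexp : Real.exp (-m^2/(4*t)) = Real.exp (-(m^2/4/t)) := by
        congr 1; field_simp
      rw [hC, hexp]
      calc t ^ (-(1:ℝ)/2) * (((4:ℝ)*Real.pi) ^ (-(1:ℝ)/2) * t ^ (-(1:ℝ)/2)
            * Real.exp (-(m^2/4/t)) * (2*d1*d2 + 6*t))
          = ((4*Real.pi) ^ (-(1:ℝ)/2)) * ((t ^ (-(1:ℝ)/2) * t ^ (-(1:ℝ)/2))
            * Real.exp (-(m^2/4/t))) * (2*d1*d2 + 6*t) := by ring
        _ = ((4*Real.pi) ^ (-(1:ℝ)/2)) * (t⁻¹ * Real.exp (-(m^2/4/t))) * (2*d1*d2 + 6*t) := by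
            rw [htt]
    have hg : Tendsto (fun t : ℝ =>
        ((4*Real.pi) ^ (-(1:ℝ)/2)) * (t⁻¹ * Real.exp (-(m^2/4 / t))) * (2*d1*d2 + 6*t))
        (nhdsWithin 0 (Set.Ioi 0)) (nhds 0) := by
      have hk := (tendsto_inv_mul_exp (e := m^2/4) (by positivity)).const_mul
        ((4*Real.pi) ^ (-(1:ℝ)/2))
      rw [mul_zero] at hk
      have hlin : Tendsto (fun t : ℝ => 2*d1*d2 + 6*t) (nhdsWithin 0 (Set.Ioi 0))
          (nhds (2*d1*d2 + 6*0)) :=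
        ((continuous_const.add (continuous_const.mul continuous_id)).tendsto 0).mono_left
          nhdsWithin_le_nhds
      have := hk.mul hlin
      rw [zero_mul] at this
      exact this
    exact squeeze_zero_norm' (eventually_nhdsWithin_of_forall hbound) hg
  have hsum : Tendsto (fun t => 1 / Real.sqrt Real.pi + E t)
      (nhdsWithin 0 (Set.Ioi 0)) (nhds (1 / Real.sqrt Real.pi)) := by
    have h := herr.const_add (1 / Real.sqrt Real.pi)
    rwa [add_zero] at h
  refine hsum.congr' ?_
  filter_upwards [self_mem_nhdsWithin] with t ht
  exact (hidentity t ht).symm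
end

section
/- Let a < b and c < d be real numbers and t > 0. Then | ∫_c^d ( ∫_a^b p_t(x,y) dy − χ_{(a,b)}(x) ) dx | ≤ 4√t, where χ_{(a,b)} is the characteristic function of the open interval (a,b). -/
open MeasureTheory Real Filter

namespace Stmt16Aux

/-- Centered Gaussian kernel. -/
noncomputable def gk (t z : ℝ) : ℝ :=
  (4 * Real.pi * t) ^ (-(1 : ℝ) / 2) * Real.exp (-(4 * t)⁻¹ * z ^ 2)

variable {t : ℝ}

lemma gk_nonneg (ht : 0 < t) (z : ℝ) : 0 ≤ gk t z := by
  unfold gk; positivity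

lemma hk_eq (t x y : ℝ) : heatKernel t x y = gk t (x - y) := by
  have h : -(x - y) ^ 2 / (4 * t) = -(4 * t)⁻¹ * (x - y) ^ 2 := by ring
  unfold heatKernel gk
  rw [h]

lemma gk_neg (t z : ℝ) : gk t (-z) = gk t z := by simp [gk]

lemma gk_integrable (ht : 0 < t) : Integrable (gk t) := by
  unfold gk
  exact (integrable_exp_neg_mul_sq (by positivity)).const_mul _

lemma sqrt_id (ht : 0 < t) :
    (4 * Real.pi * t) ^ (-(1 : ℝ) / 2) * Real.sqrt (Real.pi / (4 * t)⁻¹) = 1 := by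
  have h4 : (0:ℝ) < 4 * Real.pi * t := by positivity
  have : Real.pi / (4 * t)⁻¹ = 4 * Real.pi * t := by
    field_simp
  rw [this, Real.sqrt_eq_rpow, ← Real.rpow_add h4]
  norm_num

lemma integral_gk (ht : 0 < t) : ∫ z, gk t z = 1 := by
  unfold gk
  rw [integral_const_mul, integral_gaussian]
  exact sqrt_id ht

lemma integral_gk_Ioi (ht : 0 < t) : ∫ z in Set.Ioi (0:ℝ), gk t z = 1 / 2 := by
  unfold gk
  rw [integral_const_mul, integral_gaussian_Ioi, ← mul_div_assoc, sqrt_id ht]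

lemma gk_tail (ht : 0 < t) {r : ℝ} (hr : 0 ≤ r) :
    ∫ z in Set.Ioi r, gk t z ≤ Real.exp (-(4 * t)⁻¹ * r ^ 2) / 2 := by
  have hβ : (0:ℝ) < (4 * t)⁻¹ := by positivity
  have hsub : ∫ z in Set.Ioi r, gk t z = ∫ s in Set.Ioi (0:ℝ), gk t (s + r) := by
    have h := (measurePreserving_add_right volume r).setIntegral_preimage_emb
      (MeasurableEquiv.addRight r).measurableEmbedding (gk t) (Set.Ioi r)
    have hpre : (fun s : ℝ => s + r) ⁻¹' Set.Ioi r = Set.Ioi 0 := by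
      ext s; simp
    rw [← h]
    · rw [hpre]
  rw [hsub]
  have hle : ∫ s in Set.Ioi (0:ℝ), gk t (s + r)
      ≤ ∫ s in Set.Ioi (0:ℝ), Real.exp (-(4 * t)⁻¹ * r ^ 2) * gk t s := by
    apply integral_mono_of_nonneg
    · exact Eventually.of_forall fun s => gk_nonneg ht _
    · exact (((gk_integrable ht).const_mul _)).integrableOn
    · filter_upwards [ae_restrict_mem measurableSet_Ioi] with s hs
      have hs' : (0:ℝ) ≤ s := le_of_lt hs
      unfold gk
      have key : Real.exp (-(4 * t)⁻¹ * (s + r) ^ 2)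
          ≤ Real.exp (-(4 * t)⁻¹ * s ^ 2) * Real.exp (-(4 * t)⁻¹ * r ^ 2) := by
        rw [← Real.exp_add]
        apply Real.exp_le_exp.2
        nlinarith [mul_nonneg (mul_nonneg hβ.le hs') hr]
      have hK : (0:ℝ) ≤ (4 * Real.pi * t) ^ (-(1:ℝ)/2) := by positivity
      nlinarith [mul_le_mul_of_nonneg_left key hK]
  calc ∫ s in Set.Ioi (0:ℝ), gk t (s + r) ≤ _ := hle
    _ = Real.exp (-(4 * t)⁻¹ * r ^ 2) * ∫ s in Set.Ioi (0:ℝ), gk t s := integral_const_mul _ _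
    _ = Real.exp (-(4 * t)⁻¹ * r ^ 2) / 2 := by rw [integral_gk_Ioi ht]; ring

lemma subst_sub (t x : ℝ) {s : Set ℝ} :
    ∫ y in (fun y : ℝ => x - y) ⁻¹' s, gk t (x - y) = ∫ z in s, gk t z := by
  have hmp : MeasurePreserving (fun y : ℝ => x - y) volume volume := by
    have h := (measurePreserving_add_left (volume : Measure ℝ) x).comp
      (Measure.measurePreserving_neg (volume : Measure ℝ))
    simpa [Function.comp_def, sub_eq_add_neg] using h
  exact hmp.setIntegral_preimage_emb (MeasurableEquiv.subLeft x).measurableEmbedding _ _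

lemma subst_neg (t : ℝ) {s : Set ℝ} :
    ∫ z in Neg.neg ⁻¹' s, gk t z = ∫ z in s, gk t z := by
  have h := (Measure.measurePreserving_neg (volume : Measure ℝ)).setIntegral_preimage_emb
    (MeasurableEquiv.neg ℝ).measurableEmbedding (gk t) s
  simpa [gk_neg] using h

lemma int_Iic (t x e : ℝ) :
    ∫ y in Set.Iic e, gk t (x - y) = ∫ z in Set.Ioi (x - e), gk t z := by
  have hpre : (fun y : ℝ => x - y) ⁻¹' Set.Ici (x - e) = Set.Iic e := by
    ext y; simp [sub_le_sub_iff_left]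
  rw [← integral_Ici_eq_integral_Ioi, ← subst_sub t x, hpre]

lemma int_Ioi (t x e : ℝ) :
    ∫ y in Set.Ioi e, gk t (x - y) = ∫ z in Set.Ioi (e - x), gk t z := by
  have hpre : (fun y : ℝ => x - y) ⁻¹' Set.Iio (x - e) = Set.Ioi e := by
    ext y; simp [sub_lt_sub_iff_left]
  have h1 : ∫ y in Set.Ioi e, gk t (x - y) = ∫ z in Set.Iio (x - e), gk t z := by
    rw [← subst_sub t x, hpre]
  have hpre2 : (Neg.neg : ℝ → ℝ) ⁻¹' Set.Iio (x - e) = Set.Ioi (e - x) := by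
    ext z
    simp only [Set.mem_preimage, Set.mem_Iio, Set.mem_Ioi]
    constructor <;> intro h <;> linarith
  rw [h1, ← subst_neg t (s := Set.Iio (x - e)), hpre2]

lemma gk_comp_integrable (ht : 0 < t) (x : ℝ) :
    Integrable (fun y => gk t (x - y)) := by
  have h := ((gk_integrable ht).comp_sub_right (-x)).comp_neg
  simpa [sub_eq_add_neg, add_comm] using h

end Stmt16Aux

open Stmt16Aux

/-- One-dimensional instance of the bound `|∫ (h_t χ_E − χ_E) χ_F| ≤ 2·|Dχ_E|·√t`,
with `E = (a,b)` of perimeter `2` and `F = (c,d)`. -/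
theorem stmt_16 (a b c d t : ℝ) (hab : a < b) (hcd : c < d) (ht : 0 < t) :
    |∫ x in c..d,
        ((∫ y in a..b, heatKernel t x y) -
          Set.indicator (Set.Ioo a b) (fun _ => (1 : ℝ)) x)|
      ≤ 4 * Real.sqrt t := by
  have hβ : (0:ℝ) < (4 * t)⁻¹ := by positivity
  set g : ℝ → ℝ := fun x =>
    (Real.exp (-(4 * t)⁻¹ * (x - a) ^ 2) + Real.exp (-(4 * t)⁻¹ * (x - b) ^ 2)) / 2 with hg
  -- pointwise bound
  have hre : ∀ x : ℝ, (∫ y in a..b, heatKernel t x y) = ∫ y in Set.Ioc a b, gk t (x - y) := by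
    intro x
    rw [intervalIntegral.integral_of_le hab.le]
    exact setIntegral_congr_fun measurableSet_Ioc fun y _ => hk_eq t x y
  have hpt : ∀ x : ℝ,
      |(∫ y in Set.Ioc a b, gk t (x - y)) -
        Set.indicator (Set.Ioo a b) (fun _ => (1 : ℝ)) x| ≤ g x := by
    intro x
    have hu_nonneg : 0 ≤ ∫ y in Set.Ioc a b, gk t (x - y) :=
      setIntegral_nonneg measurableSet_Ioc fun y _ => gk_nonneg ht _
    have hexp1 : (0:ℝ) < Real.exp (-(4 * t)⁻¹ * (x - a) ^ 2) := Real.exp_pos _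
    have hexp2 : (0:ℝ) < Real.exp (-(4 * t)⁻¹ * (x - b) ^ 2) := Real.exp_pos _
    rcases le_or_gt x a with hxa | hax
    · -- x ≤ a
      have hχ : Set.indicator (Set.Ioo a b) (fun _ => (1 : ℝ)) x = 0 := by
        apply Set.indicator_of_notMem
        simp only [Set.mem_Ioo, not_and_or, not_lt]
        exact Or.inl hxa
      rw [hχ, sub_zero, abs_of_nonneg hu_nonneg]
      have h1 : (∫ y in Set.Ioc a b, gk t (x - y)) ≤ ∫ y in Set.Ioi a, gk t (x - y) := by
        apply setIntegral_mono_set (gk_comp_integrable ht x).integrableOn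
          (Eventually.of_forall fun y => gk_nonneg ht _)
        exact HasSubset.Subset.eventuallyLE Set.Ioc_subset_Ioi_self
      have h2 : (∫ y in Set.Ioi a, gk t (x - y)) ≤ Real.exp (-(4 * t)⁻¹ * (a - x) ^ 2) / 2 := by
        rw [int_Ioi]
        exact gk_tail ht (by linarith)
      have h3 : Real.exp (-(4 * t)⁻¹ * (a - x) ^ 2) = Real.exp (-(4 * t)⁻¹ * (x - a) ^ 2) := by
        congr 1; ring
      rw [h3] at h2
      simp only [hg]
      linarith
    rcases le_or_gt b x with hbx | hxb
    · -- b ≤ x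
      have hχ : Set.indicator (Set.Ioo a b) (fun _ => (1 : ℝ)) x = 0 := by
        apply Set.indicator_of_notMem
        simp only [Set.mem_Ioo, not_and_or, not_lt]
        exact Or.inr hbx
      rw [hχ, sub_zero, abs_of_nonneg hu_nonneg]
      have h1 : (∫ y in Set.Ioc a b, gk t (x - y)) ≤ ∫ y in Set.Iic b, gk t (x - y) := by
        apply setIntegral_mono_set (gk_comp_integrable ht x).integrableOn
          (Eventually.of_forall fun y => gk_nonneg ht _)
        exact HasSubset.Subset.eventuallyLE Set.Ioc_subset_Iic_self
      have h2 : (∫ y in Set.Iic b, gk t (x - y)) ≤ Real.exp (-(4 * t)⁻¹ * (x - b) ^ 2) / 2 := by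
        rw [int_Iic]
        exact gk_tail ht (by linarith)
      simp only [hg]
      linarith
    · -- a < x < b
      have hχ : Set.indicator (Set.Ioo a b) (fun _ => (1 : ℝ)) x = 1 :=
        Set.indicator_of_mem (Set.mem_Ioo.mpr ⟨hax, hxb⟩) _
      rw [hχ]
      have hint := gk_comp_integrable ht x
      have htot : ∫ y, gk t (x - y) = 1 := by
        rw [integral_sub_left_eq_self (gk t) volume x]
        exact integral_gk ht
      have hsplit1 : (∫ y in Set.Iic b, gk t (x - y)) + (∫ y in Set.Ioi b, gk t (x - y))
          = ∫ y, gk t (x - y) := by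
        have := integral_add_compl measurableSet_Iic hint (f := fun y => gk t (x - y)) (s := Set.Iic b)
        rwa [Set.compl_Iic] at this
      have hsplit2 : (∫ y in Set.Iic a, gk t (x - y)) + (∫ y in Set.Ioc a b, gk t (x - y))
          = ∫ y in Set.Iic b, gk t (x - y) := by
        rw [← setIntegral_union (Set.Iic_disjoint_Ioc le_rfl) measurableSet_Ioc
          hint.integrableOn hint.integrableOn, Set.Iic_union_Ioc_eq_Iic hab.le]
      have hA : (∫ y in Set.Iic a, gk t (x - y)) ≤ Real.exp (-(4 * t)⁻¹ * (x - a) ^ 2) / 2 := by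
        rw [int_Iic]
        exact gk_tail ht (by linarith)
      have hB : (∫ y in Set.Ioi b, gk t (x - y)) ≤ Real.exp (-(4 * t)⁻¹ * (x - b) ^ 2) / 2 := by
        rw [int_Ioi]
        have h3 : Real.exp (-(4 * t)⁻¹ * (b - x) ^ 2) = Real.exp (-(4 * t)⁻¹ * (x - b) ^ 2) := by
          congr 1; ring
        rw [← h3]
        exact gk_tail ht (by linarith)
      have hA0 : 0 ≤ ∫ y in Set.Iic a, gk t (x - y) :=
        setIntegral_nonneg measurableSet_Iic fun y _ => gk_nonneg ht _
      have hB0 : 0 ≤ ∫ y in Set.Ioi b, gk t (x - y) :=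
        setIntegral_nonneg measurableSet_Ioi fun y _ => gk_nonneg ht _
      rw [abs_sub_comm, abs_of_nonneg (by linarith)]
      simp only [hg]
      linarith
  -- integrability of g
  have hgInt : Integrable g := by
    have h1 : Integrable (fun x : ℝ => Real.exp (-(4 * t)⁻¹ * (x - a) ^ 2)) :=
      (integrable_exp_neg_mul_sq hβ).comp_sub_right a
    have h2 : Integrable (fun x : ℝ => Real.exp (-(4 * t)⁻¹ * (x - b) ^ 2)) :=
      (integrable_exp_neg_mul_sq hβ).comp_sub_right b
    exact (h1.add h2).div_const 2
  -- main estimate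
  rw [intervalIntegral.integral_of_le hcd.le]
  simp only [hre]
  rw [← Real.norm_eq_abs]
  calc ‖∫ x in Set.Ioc c d,
        ((∫ y in Set.Ioc a b, gk t (x - y)) -
          Set.indicator (Set.Ioo a b) (fun _ => (1 : ℝ)) x)‖
      ≤ ∫ x in Set.Ioc c d, g x := by
        apply norm_integral_le_of_norm_le hgInt.integrableOn
        exact Eventually.of_forall fun x => by
          rw [Real.norm_eq_abs]; exact hpt x
    _ ≤ ∫ x, g x := by
        apply setIntegral_le_integral hgInt
        exact Eventually.of_forall fun x => by positivity
    _ = Real.sqrt (Real.pi / (4 * t)⁻¹) := by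
        simp only [hg]
        rw [integral_div]
        rw [integral_add (((integrable_exp_neg_mul_sq hβ).comp_sub_right a))
          (((integrable_exp_neg_mul_sq hβ).comp_sub_right b))]
        have ha : ∫ x : ℝ, Real.exp (-(4 * t)⁻¹ * (x - a) ^ 2)
            = Real.sqrt (Real.pi / (4 * t)⁻¹) := by
          rw [integral_sub_right_eq_self (fun u : ℝ => Real.exp (-(4 * t)⁻¹ * u ^ 2)) a]
          exact integral_gaussian _
        have hb' : ∫ x : ℝ, Real.exp (-(4 * t)⁻¹ * (x - b) ^ 2)
            = Real.sqrt (Real.pi / (4 * t)⁻¹) := by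
          rw [integral_sub_right_eq_self (fun u : ℝ => Real.exp (-(4 * t)⁻¹ * u ^ 2)) b]
          exact integral_gaussian _
        rw [ha, hb']
        ring
    _ ≤ 4 * Real.sqrt t := by
        have h1 : Real.pi / (4 * t)⁻¹ = Real.pi * (4 * t) := by field_simp
        rw [h1]
        have h2 : Real.pi * (4 * t) ≤ 16 * t := by nlinarith [Real.pi_le_four, ht.le]
        calc Real.sqrt (Real.pi * (4 * t)) ≤ Real.sqrt (16 * t) := Real.sqrt_le_sqrt h2
          _ = 4 * Real.sqrt t := by
            rw [show (16:ℝ) * t = 4 ^ 2 * t by ring, Real.sqrt_mul (by positivity),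
              Real.sqrt_sq (by norm_num)]
end
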